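/- arXiv:2308.03178 — 5 statements merged into one kernel-verified Lean document; each statement's English description precedes it below -/
import Mathlib

section
/- Let X be a real Banach space with the approximation property and let F : [0,1] → 2^X \ {∅} be a compact-valued bounded multifunction. Then I(F) = I(conv F). -/
open Pointwise Filter Metric Set

/-- A tagged partition of `[0,1]` into finitely many segments with tags. -/
structure TaggedPartition where
  n : ℕ
  pt : Fin (n + 1) → ℝ
  tag : Fin n → ℝ
  pt_zero : pt 0 = 0
  pt_last : pt (Fin.last n) = 1
  pt_mono : Monotone pt
  tag_mem : ∀ i : Fin n, tag i ∈ Set.Icc (pt i.castSucc) (pt i.succ)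

/-- The diameter (mesh) of a tagged partition. -/
noncomputable def TaggedPartition.mesh (P : TaggedPartition) : ℝ :=
  ⨆ i : Fin P.n, (P.pt i.succ - P.pt i.castSucc)

namespace TaggedPartition

variable (P : TaggedPartition)

lemma n_pos : 0 < P.n := by
  rcases Nat.eq_zero_or_pos P.n with h | h
  · exfalso
    have h0 := P.pt_zero
    have h1 := P.pt_last
    have : Fin.last P.n = 0 := by
      ext; simp [h]
    rw [this, h0] at h1
    norm_num at h1
  · exact h

lemma len_nonneg (i : Fin P.n) : 0 ≤ P.pt i.succ - P.pt i.castSucc :=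
  sub_nonneg.2 (P.pt_mono (by simp [Fin.castSucc_le_succ] : i.castSucc ≤ i.succ))

lemma len_le_mesh (i : Fin P.n) : P.pt i.succ - P.pt i.castSucc ≤ P.mesh := by
  exact le_ciSup (f := fun i : Fin P.n => P.pt i.succ - P.pt i.castSucc)
    (Set.Finite.bddAbove (Set.finite_range _)) i

lemma mesh_nonneg : 0 ≤ P.mesh := by
  have := P.n_pos
  have i : Fin P.n := ⟨0, this⟩
  exact le_trans (P.len_nonneg i) (P.len_le_mesh i)

lemma sum_len : ∑ i : Fin P.n, (P.pt i.succ - P.pt i.castSucc) = 1 := by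
  set f : ℕ → ℝ := fun j => P.pt ⟨min j P.n, by omega⟩ with hf
  have key : ∀ i : Fin P.n, P.pt i.succ - P.pt i.castSucc = f (i.1 + 1) - f i.1 := by
    intro i
    have h1 : (⟨min (i.1 + 1) P.n, by omega⟩ : Fin (P.n + 1)) = i.succ := by
      ext; simp [Nat.min_eq_left (Nat.succ_le_of_lt i.2)]
    have h2 : (⟨min i.1 P.n, by omega⟩ : Fin (P.n + 1)) = i.castSucc := by
      ext; simp [Nat.min_eq_left (le_of_lt i.2)]
    simp only [hf, h1, h2]
  calc ∑ i : Fin P.n, (P.pt i.succ - P.pt i.castSucc)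
      = ∑ i : Fin P.n, (f (i.1 + 1) - f i.1) := by
        exact Finset.sum_congr rfl fun i _ => key i
    _ = ∑ i ∈ Finset.range P.n, (f (i + 1) - f i) := by
        exact Fin.sum_univ_eq_sum_range (fun j => f (j + 1) - f j) P.n
    _ = f P.n - f 0 := Finset.sum_range_sub f P.n
    _ = 1 := by
        have hn : (⟨min P.n P.n, by omega⟩ : Fin (P.n + 1)) = Fin.last P.n := by
          ext; simp
        have h0 : (⟨min 0 P.n, by omega⟩ : Fin (P.n + 1)) = 0 := by
          ext; simp
        simp only [hf, hn, h0, P.pt_last, P.pt_zero, sub_zero]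

lemma pt_mem_Icc (j : Fin (P.n + 1)) : P.pt j ∈ Set.Icc (0:ℝ) 1 := by
  constructor
  · rw [← P.pt_zero]; exact P.pt_mono (Fin.zero_le j)
  · rw [← P.pt_last]; exact P.pt_mono (Fin.le_last j)

lemma tag_mem_Icc (i : Fin P.n) : P.tag i ∈ Set.Icc (0:ℝ) 1 := by
  have h := P.tag_mem i
  constructor
  · exact le_trans (P.pt_mem_Icc i.castSucc).1 h.1
  · exact le_trans h.2 (P.pt_mem_Icc i.succ).2

end TaggedPartition

/-- Riemann integral sum of a multifunction, using Minkowski sums and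
pointwise scalar multiples of sets. -/
noncomputable def msum {X : Type*} [NormedAddCommGroup X] [NormedSpace ℝ X]
    (F : ℝ → Set X) (P : TaggedPartition) : Set X :=
  ∑ i : Fin P.n, (P.pt i.succ - P.pt i.castSucc) • F (P.tag i)

section MsumBasic

variable {X : Type*} [NormedAddCommGroup X] [NormedSpace ℝ X]

lemma isCompact_finset_sum {ι : Type*} (s : Finset ι) (f : ι → Set X)
    (h : ∀ i ∈ s, IsCompact (f i)) : IsCompact (∑ i ∈ s, f i) := by
  classical
  induction s using Finset.induction_on with
  | empty =>
    rw [Finset.sum_empty]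
    exact isCompact_singleton
  | insert a s hx ih =>
    rw [Finset.sum_insert hx]
    exact (h a (Finset.mem_insert_self a s)).add
      (ih fun i hi => h i (Finset.mem_insert_of_mem hi))

lemma isCompact_msum (F : ℝ → Set X) (P : TaggedPartition)
    (h : ∀ t ∈ Set.Icc (0:ℝ) 1, IsCompact (F t)) : IsCompact (msum F P) := by
  apply isCompact_finset_sum
  intro i _
  exact (h _ (P.tag_mem_Icc i)).smul _

lemma mem_msum {F : ℝ → Set X} {P : TaggedPartition} {x : X} :
    x ∈ msum F P ↔ ∃ c : Fin P.n → X, (∀ i, c i ∈ F (P.tag i)) ∧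
      x = ∑ i : Fin P.n, (P.pt i.succ - P.pt i.castSucc) • c i := by
  classical
  rw [msum, Set.mem_fintype_sum]
  constructor
  · rintro ⟨g, hg, rfl⟩
    have : ∀ i : Fin P.n, ∃ c, c ∈ F (P.tag i) ∧
        g i = (P.pt i.succ - P.pt i.castSucc) • c := by
      intro i
      rcases hg i with ⟨c, hc, hgc⟩
      exact ⟨c, hc, hgc.symm⟩
    choose c hc hgc using this
    exact ⟨c, hc, by rw [Finset.sum_congr rfl fun i _ => hgc i]⟩
  · rintro ⟨c, hc, rfl⟩
    exact ⟨fun i => (P.pt i.succ - P.pt i.castSucc) • c i,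
      fun i => Set.smul_mem_smul_set (hc i), rfl⟩

lemma msum_nonempty {F : ℝ → Set X} (P : TaggedPartition)
    (h : ∀ t ∈ Set.Icc (0:ℝ) 1, (F t).Nonempty) : (msum F P).Nonempty := by
  have : ∀ i : Fin P.n, ∃ c, c ∈ F (P.tag i) := fun i => h _ (P.tag_mem_Icc i)
  choose c hc using this
  exact ⟨_, mem_msum.2 ⟨c, hc, rfl⟩⟩

lemma msum_convexHull (F : ℝ → Set X) (P : TaggedPartition) :
    msum (fun t => convexHull ℝ (F t)) P = convexHull ℝ (msum F P) := by
  rw [msum, msum, convexHull_sum]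
  exact Finset.sum_congr rfl fun i _ => (convexHull_smul _ _).symm

end MsumBasic

section Bridging

variable {X : Type*} [NormedAddCommGroup X] [NormedSpace ℝ X]

lemma haus_le_ofReal {s t : Set X} {r : ℝ} (hr : 0 ≤ r)
    (h1 : ∀ x ∈ s, ∃ y ∈ t, dist x y ≤ r) (h2 : ∀ y ∈ t, ∃ x ∈ s, dist x y ≤ r) :
    EMetric.hausdorffEdist s t ≤ ENNReal.ofReal r := by
  apply EMetric.hausdorffEdist_le_of_mem_edist
  · intro x hx
    rcases h1 x hx with ⟨y, hy, hd⟩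
    exact ⟨y, hy, by rw [edist_dist]; exact ENNReal.ofReal_le_ofReal hd⟩
  · intro y hy
    rcases h2 y hy with ⟨x, hx, hd⟩
    exact ⟨x, hx, by rw [edist_comm, edist_dist]; exact ENNReal.ofReal_le_ofReal hd⟩

lemma exists_dist_lt_of_haus {s t : Set X} {r : ℝ} {x : X} (hx : x ∈ s)
    (h : EMetric.hausdorffEdist s t < ENNReal.ofReal r) :
    ∃ y ∈ t, dist x y < r := by
  have h1 : EMetric.infEdist x t < ENNReal.ofReal r :=
    lt_of_le_of_lt (EMetric.infEdist_le_hausdorffEdist_of_mem hx) h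
  rcases EMetric.infEdist_lt_iff.1 h1 with ⟨y, hy, hd⟩
  exact ⟨y, hy, by rwa [edist_dist, ENNReal.ofReal_lt_ofReal_iff_of_nonneg dist_nonneg] at hd⟩

/-- Pointwise approximation passes to convex hulls. -/
lemma convexHull_approx {s t : Set X} {r : ℝ} (hr : 0 ≤ r)
    (h : ∀ x ∈ s, ∃ y ∈ t, dist x y ≤ r) :
    ∀ x ∈ convexHull ℝ s, ∃ y ∈ convexHull ℝ t, dist x y ≤ r := by
  intro x hx
  rw [convexHull_eq] at hx
  obtain ⟨ι, u, w, z, hw0, hw1, hz, hx⟩ := hx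
  have : ∀ i ∈ u, ∃ y ∈ t, dist (z i) y ≤ r := fun i hi => h (z i) (hz i hi)
  classical
  choose y hyt hyd using this
  set y' : ι → X := fun i => if hi : i ∈ u then y i hi else 0 with hy'
  refine ⟨u.centerMass w y', ?_, ?_⟩
  · apply Finset.centerMass_mem_convexHull _ hw0 (by rw [hw1]; norm_num)
    intro i hi
    simp only [hy', dif_pos hi]
    exact hyt i hi
  · rw [← hx, Finset.centerMass_eq_of_sum_1 _ _ hw1, Finset.centerMass_eq_of_sum_1 _ _ hw1,
      dist_eq_norm, ← Finset.sum_sub_distrib]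
    calc ‖∑ i ∈ u, (w i • z i - w i • y' i)‖
        ≤ ∑ i ∈ u, ‖w i • z i - w i • y' i‖ := norm_sum_le _ _
      _ ≤ ∑ i ∈ u, w i * r := by
          apply Finset.sum_le_sum
          intro i hi
          rw [← smul_sub, norm_smul, Real.norm_eq_abs, abs_of_nonneg (hw0 i hi)]
          have : ‖z i - y' i‖ ≤ r := by
            simp only [hy', dif_pos hi]
            rw [← dist_eq_norm]
            exact hyd i hi
          exact mul_le_mul_of_nonneg_left this (hw0 i hi)
      _ = r := by rw [← Finset.sum_mul, hw1, one_mul]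

/-- Points of the convex hull of a set in a closed ball stay in the ball. -/
lemma norm_le_of_mem_convexHull {s : Set X} {M : ℝ} (hs : ∀ a ∈ s, ‖a‖ ≤ M)
    {x : X} (hx : x ∈ convexHull ℝ s) : ‖x‖ ≤ M := by
  have hsub : s ⊆ Metric.closedBall 0 M := by
    intro a ha; rw [Metric.mem_closedBall, dist_zero_right]; exact hs a ha
  have := convexHull_min hsub (convex_closedBall 0 M) hx
  rwa [Metric.mem_closedBall, dist_zero_right] at this

/-- A set that is approximated by totally bounded sets is totally bounded. -/
lemma totallyBounded_of_haus {A : Set X} {B : ℕ → Set X}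
    (htb : ∀ k, TotallyBounded (B k))
    (h : ∀ r : ℝ, 0 < r → ∃ k, EMetric.hausdorffEdist (B k) A < ENNReal.ofReal r) :
    TotallyBounded A := by
  rw [Metric.totallyBounded_iff]
  intro ε hε
  obtain ⟨k, hk⟩ := h (ε / 2) (by linarith)
  obtain ⟨t, htf, hcover⟩ := Metric.totallyBounded_iff.1 (htb k) (ε / 2) (by linarith)
  refine ⟨t, htf, ?_⟩
  intro x hx
  have : EMetric.hausdorffEdist A (B k) < ENNReal.ofReal (ε / 2) := by
    exact (Metric.hausdorffEDist_comm).trans_lt hk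
  obtain ⟨y, hy, hd⟩ := exists_dist_lt_of_haus hx this
  obtain ⟨c, hc, hyc⟩ := Set.mem_iUnion₂.1 (hcover hy)
  rw [Metric.mem_ball] at hyc
  refine Set.mem_iUnion₂.2 ⟨c, hc, ?_⟩
  rw [Metric.mem_ball]
  calc dist x c ≤ dist x y + dist y c := dist_triangle _ _ _
    _ < ε / 2 + ε / 2 := by exact add_lt_add hd hyc
    _ = ε := by ring

lemma tendsto_zero_of_forall {α : Type*} {l : Filter α} {f : α → ENNReal}
    (h : ∀ r : ℝ, 0 < r → ∀ᶠ k in l, f k ≤ ENNReal.ofReal r) :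
    Filter.Tendsto f l (nhds 0) := by
  rw [ENNReal.tendsto_nhds_zero]
  intro ε hε
  rcases eq_or_ne ε ⊤ with rfl | hne
  · filter_upwards [h 1 one_pos] with k hk using le_top
  · have hpos : 0 < ε.toReal := ENNReal.toReal_pos (ne_of_gt hε) hne
    filter_upwards [h ε.toReal hpos] with k hk
    rwa [ENNReal.ofReal_toReal hne] at hk

lemma tendsto_zero_of_le_add {α : Type*} {l : Filter α} {f g h : α → ENNReal}
    (hf : Filter.Tendsto f l (nhds 0)) (hg : Filter.Tendsto g l (nhds 0))
    (hle : ∀ k, h k ≤ f k + g k) : Filter.Tendsto h l (nhds 0) := by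
  rw [ENNReal.tendsto_nhds_zero]
  intro ε hε
  have h2 : (0:ENNReal) < ε / 2 := by
    apply ENNReal.div_pos (ne_of_gt hε) (by norm_num)
  filter_upwards [ENNReal.tendsto_nhds_zero.1 hf (ε/2) h2,
    ENNReal.tendsto_nhds_zero.1 hg (ε/2) h2] with k hk1 hk2
  calc h k ≤ f k + g k := hle k
    _ ≤ ε/2 + ε/2 := add_le_add hk1 hk2
    _ = ε := ENNReal.add_halves ε

end Bridging

section Greedy

variable {ι β : Type*} [DecidableEq ι] [DecidableEq β]

/-- Greedy allocation: weights, each at most `δ`, can be distributed into bins so that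
each bin's total approximates a prescribed target. -/
lemma greedy_alloc (b : Finset β) (hb : b.Nonempty) (s : Finset ι) (lam : ι → ℝ)
    (τ : β → ℝ) (δ : ℝ) (hδ : 0 ≤ δ)
    (h0 : ∀ i ∈ s, 0 ≤ lam i) (h1 : ∀ i ∈ s, lam i ≤ δ) (hτ : ∀ j ∈ b, 0 ≤ τ j) :
    ∃ f : ι → β, (∀ i ∈ s, f i ∈ b) ∧
      ∑ j ∈ b, |(∑ i ∈ s.filter (fun i => f i = j), lam i) - τ j|
        ≤ 3 ^ b.card * (δ + |(∑ j ∈ b, τ j) - ∑ i ∈ s, lam i|) := by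
  classical
  induction b using Finset.cons_induction generalizing s τ with
  | empty => exact absurd hb (by simp)
  | cons j₀ b hj ih =>
    rcases b.eq_empty_or_nonempty with rfl | hbne
    · -- single bin
      refine ⟨fun _ => j₀, fun i _ => Finset.mem_cons_self _ _, ?_⟩
      simp only [Finset.sum_cons, Finset.sum_empty, Finset.card_cons, Finset.card_empty]
      rw [Finset.filter_true]
      have h3 : (1:ℝ) ≤ 3 ^ (0 + 1) := by norm_num
      have habs : |(∑ i ∈ s, lam i) - τ j₀| = |τ j₀ + 0 - ∑ i ∈ s, lam i| := by
        rw [add_zero, abs_sub_comm]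
      rw [habs]
      nlinarith [abs_nonneg (τ j₀ + 0 - ∑ i ∈ s, lam i)]
    · -- at least two bins: peel off bin j₀
      set Λ : ℝ := ∑ i ∈ s, lam i with hΛ
      set D : ℝ := (∑ j ∈ Finset.cons j₀ b hj, τ j) - Λ with hD
      -- choose a maximal-sum subset S with sum ≤ τ j₀
      have hPne : (s.powerset.filter (fun S => ∑ i ∈ S, lam i ≤ τ j₀)).Nonempty := by
        refine ⟨∅, ?_⟩
        simp [hτ j₀ (Finset.mem_cons_self _ _)]
      obtain ⟨S, hSmem, hSmax⟩ :=
        Finset.exists_max_image _ (fun S => ∑ i ∈ S, lam i) hPne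
      rw [Finset.mem_filter, Finset.mem_powerset] at hSmem
      obtain ⟨hSsub, hSle⟩ := hSmem
      set w₀ : ℝ := ∑ i ∈ S, lam i with hw₀
      -- the key greedy estimate
      have hkey : τ j₀ - w₀ ≤ δ + |D| := by
        by_cases hex : ∃ i ∈ s \ S, 0 < lam i
        · obtain ⟨i, hiS, hipos⟩ := hex
          rw [Finset.mem_sdiff] at hiS
          have hins : ∑ x ∈ insert i S, lam x = w₀ + lam i := by
            rw [Finset.sum_insert hiS.2, hw₀]; ring
          by_cases hcase : ∑ x ∈ insert i S, lam x ≤ τ j₀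
          · have := hSmax (insert i S) (by
              rw [Finset.mem_filter, Finset.mem_powerset]
              exact ⟨Finset.insert_subset hiS.1 hSsub, hcase⟩)
            rw [hins] at this
            linarith
          · push_neg at hcase
            rw [hins] at hcase
            have : lam i ≤ δ := h1 i hiS.1
            have : τ j₀ - w₀ < δ := by linarith
            linarith [abs_nonneg D]
        · push_neg at hex
          have hzero : ∀ i ∈ s \ S, lam i = 0 := by
            intro i hi
            have h1' := hex i hi
            have h2' := h0 i ((Finset.mem_sdiff.1 hi).1)
            linarith
          have : Λ = w₀ := by
            rw [hΛ, ← Finset.sum_sdiff hSsub, hw₀, Finset.sum_eq_zero hzero, zero_add]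
          have hτb : 0 ≤ ∑ j ∈ b, τ j :=
            Finset.sum_nonneg fun j hjb => hτ j (Finset.mem_cons_of_mem hjb)
          have hDval : D = τ j₀ + (∑ j ∈ b, τ j) - Λ := by
            rw [hD, Finset.sum_cons]
          have : τ j₀ - Λ ≤ D := by rw [hDval]; linarith
          linarith [le_abs_self D]
      have hw₀0 : 0 ≤ w₀ := Finset.sum_nonneg fun i hi => h0 i (hSsub hi)
      have habs0 : |w₀ - τ j₀| ≤ δ + |D| := by
        rw [abs_sub_comm, abs_of_nonneg (by linarith [hSle] : (0:ℝ) ≤ τ j₀ - w₀)]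
        exact hkey
      -- recurse on the rest
      obtain ⟨f', hf'mem, hf'sum⟩ := ih hbne (s \ S) τ
        (fun i hi => h0 i ((Finset.mem_sdiff.1 hi).1))
        (fun i hi => h1 i ((Finset.mem_sdiff.1 hi).1))
        (fun j hjb => hτ j (Finset.mem_cons_of_mem hjb))
      set f : ι → β := fun i => if i ∈ S then j₀ else f' i with hf
      refine ⟨f, ?_, ?_⟩
      · intro i hi
        by_cases hiS : i ∈ S
        · simp only [hf, if_pos hiS]; exact Finset.mem_cons_self _ _
        · simp only [hf, if_neg hiS]
          by_cases hi' : i ∈ s \ S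
          · exact Finset.mem_cons_of_mem (hf'mem i hi')
          · -- i ∈ s, i ∉ S means i ∈ s \ S
            exact absurd (Finset.mem_sdiff.2 ⟨hi, hiS⟩) hi'
      · -- filter identities
        have hfilt0 : s.filter (fun i => f i = j₀) = S := by
          ext i
          simp only [Finset.mem_filter, hf]
          constructor
          · rintro ⟨his, hfi⟩
            by_contra hiS
            rw [if_neg hiS] at hfi
            have := hf'mem i (Finset.mem_sdiff.2 ⟨his, hiS⟩)
            rw [hfi] at this
            exact hj this
          · intro hiS
            exact ⟨hSsub hiS, by rw [if_pos hiS]⟩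
        have hfiltj : ∀ j ∈ b, s.filter (fun i => f i = j) = (s \ S).filter (fun i => f' i = j) := by
          intro j hjb
          ext i
          simp only [Finset.mem_filter, Finset.mem_sdiff, hf]
          constructor
          · rintro ⟨his, hfi⟩
            by_cases hiS : i ∈ S
            · rw [if_pos hiS] at hfi
              exact absurd (hfi ▸ hjb) hj
            · rw [if_neg hiS] at hfi
              exact ⟨⟨his, hiS⟩, hfi⟩
          · rintro ⟨⟨his, hiS⟩, hfi⟩
            exact ⟨his, by rw [if_neg hiS]; exact hfi⟩
        rw [Finset.sum_cons, hfilt0]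
        have hsum_rest : ∑ j ∈ b, |(∑ i ∈ s.filter (fun i => f i = j), lam i) - τ j|
            = ∑ j ∈ b, |(∑ i ∈ (s \ S).filter (fun i => f' i = j), lam i) - τ j| := by
          apply Finset.sum_congr rfl
          intro j hjb
          rw [hfiltj j hjb]
        rw [hsum_rest]
        -- discrepancy for the recursive call
        have hD' : |(∑ j ∈ b, τ j) - ∑ i ∈ s \ S, lam i| ≤ δ + 2 * |D| := by
          have hsplit : ∑ i ∈ s \ S, lam i = Λ - w₀ := by
            rw [hΛ, ← Finset.sum_sdiff hSsub, hw₀]; ring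
          have hDval : (∑ j ∈ b, τ j) = D + Λ - τ j₀ := by
            rw [hD, Finset.sum_cons]; ring
          rw [hsplit, hDval]
          have : D + Λ - τ j₀ - (Λ - w₀) = D + (w₀ - τ j₀) := by ring
          rw [this]
          calc |D + (w₀ - τ j₀)| ≤ |D| + |w₀ - τ j₀| := abs_add_le _ _
            _ ≤ |D| + (δ + |D|) := by linarith [habs0]
            _ = δ + 2 * |D| := by ring
        have hbound := hf'sum
        have h3pos : (0:ℝ) < 3 ^ b.card := by positivity
        have hfinal : ∑ j ∈ b, |(∑ i ∈ (s \ S).filter (fun i => f' i = j), lam i) - τ j|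
            ≤ 3 ^ b.card * (δ + (δ + 2 * |D|)) := by
          calc _ ≤ 3 ^ b.card * (δ + |(∑ j ∈ b, τ j) - ∑ i ∈ s \ S, lam i|) := hbound
            _ ≤ 3 ^ b.card * (δ + (δ + 2 * |D|)) := by
                apply mul_le_mul_of_nonneg_left _ (le_of_lt h3pos)
                linarith [hD']
        rw [Finset.card_cons]
        have h3mono : (1:ℝ) ≤ 3 ^ b.card := one_le_pow₀ (by norm_num : (1:ℝ) ≤ 3)
        have hDnn : 0 ≤ |D| := abs_nonneg D
        calc |w₀ - τ j₀| + ∑ j ∈ b, |(∑ i ∈ (s \ S).filter (fun i => f' i = j), lam i) - τ j|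
            ≤ (δ + |D|) + 3 ^ b.card * (δ + (δ + 2 * |D|)) := by linarith [habs0, hfinal]
          _ = (δ + |D|) + 2 * 3 ^ b.card * (δ + |D|) := by ring
          _ ≤ 3 ^ (b.card + 1) * (δ + |D|) := by
              have : (1:ℝ) + 2 * 3 ^ b.card ≤ 3 ^ (b.card + 1) := by
                rw [pow_succ]
                nlinarith
              nlinarith [hδ, hDnn]
end Greedy

section ClassApprox

variable {X : Type*} [NormedAddCommGroup X] [NormedSpace ℝ X]

/-- Within one "class" with a common finite set `c` of allowed values, convex combinations
can be approximated by pure selections, with error controlled by the maximal weight. -/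
lemma class_approx {ι : Type*} [DecidableEq ι] (c : Finset X) (hc : c.Nonempty)
    (R δ : ℝ) (hR : ∀ g ∈ c, ‖g‖ ≤ R) (hδ : 0 ≤ δ)
    (s : Finset ι) (lam : ι → ℝ) (h0 : ∀ i ∈ s, 0 ≤ lam i) (h1 : ∀ i ∈ s, lam i ≤ δ)
    (cc : ι → X) (hcc : ∀ i ∈ s, cc i ∈ convexHull ℝ (c : Set X)) :
    ∃ a : ι → X, (∀ i ∈ s, a i ∈ c) ∧
      ‖(∑ i ∈ s, lam i • cc i) - ∑ i ∈ s, lam i • a i‖ ≤ 3 ^ c.card * δ * R := by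
  classical
  have hR0 : 0 ≤ R := le_trans (norm_nonneg _) (hR _ hc.choose_spec)
  -- weights for each convex combination
  have hw : ∀ i ∈ s, ∃ w : X → ℝ, (∀ y ∈ c, 0 ≤ w y) ∧ ∑ y ∈ c, w y = 1 ∧
      ∑ y ∈ c, w y • y = cc i := fun i hi => Finset.mem_convexHull'.1 (hcc i hi)
  choose! w hw0 hw1 hwc using hw
  set τ : X → ℝ := fun g => ∑ i ∈ s, lam i * w i g with hτdef
  have hτ0 : ∀ g ∈ c, 0 ≤ τ g := fun g hg =>
    Finset.sum_nonneg fun i hi => mul_nonneg (h0 i hi) (hw0 i hi g hg)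
  have hτsum : ∑ g ∈ c, τ g = ∑ i ∈ s, lam i := by
    rw [hτdef, Finset.sum_comm]
    apply Finset.sum_congr rfl
    intro i hi
    rw [← Finset.mul_sum, hw1 i hi, mul_one]
  obtain ⟨f, hfmem, hfsum⟩ := greedy_alloc c hc s lam τ δ hδ h0 h1 hτ0
  refine ⟨f, hfmem, ?_⟩
  have he1 : ∑ i ∈ s, lam i • cc i = ∑ g ∈ c, τ g • g := by
    calc ∑ i ∈ s, lam i • cc i = ∑ i ∈ s, ∑ g ∈ c, (lam i * w i g) • g := by
          apply Finset.sum_congr rfl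
          intro i hi
          rw [← hwc i hi, Finset.smul_sum]
          exact Finset.sum_congr rfl fun g _ => by rw [smul_smul]
      _ = ∑ g ∈ c, ∑ i ∈ s, (lam i * w i g) • g := Finset.sum_comm
      _ = ∑ g ∈ c, τ g • g := by
          apply Finset.sum_congr rfl
          intro g _
          rw [hτdef, Finset.sum_smul]
  have he2 : ∑ i ∈ s, lam i • f i = ∑ g ∈ c, (∑ i ∈ s.filter (fun i => f i = g), lam i) • g := by
    rw [← Finset.sum_fiberwise_of_maps_to hfmem (fun i => lam i • f i)]
    apply Finset.sum_congr rfl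
    intro g _
    rw [Finset.sum_smul]
    apply Finset.sum_congr rfl
    intro i hi
    rw [(Finset.mem_filter.1 hi).2]
  have ha : ∀ i ∈ s, f i ∈ c := hfmem
  rw [he1, he2, ← Finset.sum_sub_distrib]
  calc ‖∑ g ∈ c, (τ g • g - (∑ i ∈ s.filter (fun i => f i = g), lam i) • g)‖
      ≤ ∑ g ∈ c, ‖τ g • g - (∑ i ∈ s.filter (fun i => f i = g), lam i) • g‖ := norm_sum_le _ _
    _ ≤ ∑ g ∈ c, |(∑ i ∈ s.filter (fun i => f i = g), lam i) - τ g| * R := by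
        apply Finset.sum_le_sum
        intro g hg
        rw [← sub_smul, norm_smul, Real.norm_eq_abs, abs_sub_comm]
        exact mul_le_mul_of_nonneg_left (hR g hg) (abs_nonneg _)
    _ = (∑ g ∈ c, |(∑ i ∈ s.filter (fun i => f i = g), lam i) - τ g|) * R := by
        rw [Finset.sum_mul]
    _ ≤ (3 ^ c.card * (δ + |(∑ g ∈ c, τ g) - ∑ i ∈ s, lam i|)) * R := by
        apply mul_le_mul_of_nonneg_right hfsum hR0
    _ = 3 ^ c.card * δ * R := by
        rw [hτsum, sub_self, abs_zero, add_zero]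

end ClassApprox

section GridApprox

variable {X : Type*} [NormedAddCommGroup X] [NormedSpace ℝ X]

/-- Approximation of a weighted sum of convex combinations (with values constrained to
subsets of a fixed finite grid `G`) by a weighted sum of pure selections. -/
lemma grid_approx (G : Finset X) (R δ : ℝ) (hR : ∀ g ∈ G, ‖g‖ ≤ R) (hR0 : 0 ≤ R)
    (hδ : 0 ≤ δ) {n : ℕ} (lam : Fin n → ℝ)
    (h0 : ∀ i, 0 ≤ lam i) (h1 : ∀ i, lam i ≤ δ)
    (D : Fin n → Finset X) (hDG : ∀ i, D i ⊆ G) (hDne : ∀ i, (D i).Nonempty)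
    (cc : Fin n → X) (hcc : ∀ i, cc i ∈ convexHull ℝ ((D i : Set X))) :
    ∃ a : Fin n → X, (∀ i, a i ∈ D i) ∧
      ‖(∑ i, lam i • cc i) - ∑ i, lam i • a i‖
        ≤ 2 ^ G.card * 3 ^ G.card * δ * R := by
  classical
  set classes : Finset (Finset X) := Finset.image D Finset.univ with hclasses
  have hclassmem : ∀ i : Fin n, D i ∈ classes := fun i =>
    Finset.mem_image.2 ⟨i, Finset.mem_univ i, rfl⟩
  -- per-class approximation
  have hclass : ∀ c : Finset X, ∃ ac : Fin n → X, c ∈ classes →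
      (∀ i ∈ Finset.univ.filter (fun i => D i = c), ac i ∈ c) ∧
      ‖(∑ i ∈ Finset.univ.filter (fun i => D i = c), lam i • cc i)
        - ∑ i ∈ Finset.univ.filter (fun i => D i = c), lam i • ac i‖
        ≤ 3 ^ G.card * δ * R := by
    intro c
    by_cases hc : c ∈ classes
    · obtain ⟨i₀, _, hi₀⟩ := Finset.mem_image.1 hc
      have hcne : c.Nonempty := hi₀ ▸ hDne i₀
      have hcsub : c ⊆ G := hi₀ ▸ hDG i₀
      obtain ⟨ac, hacmem, hacsum⟩ := class_approx c hcne R δ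
        (fun g hg => hR g (hcsub hg)) hδ
        (Finset.univ.filter (fun i => D i = c)) lam
        (fun i _ => h0 i) (fun i _ => h1 i) cc
        (fun i hi => by
          have : D i = c := (Finset.mem_filter.1 hi).2
          exact this ▸ hcc i)
      refine ⟨ac, fun _ => ⟨hacmem, le_trans hacsum ?_⟩⟩
      have hcard : c.card ≤ G.card := Finset.card_le_card hcsub
      have h3 : (3:ℝ) ^ c.card ≤ 3 ^ G.card :=
        pow_le_pow_right₀ (by norm_num) hcard
      exact mul_le_mul_of_nonneg_right (mul_le_mul_of_nonneg_right h3 hδ) hR0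
    · exact ⟨fun _ => 0, fun h => absurd h hc⟩
  choose ac hac using hclass
  set a : Fin n → X := fun i => ac (D i) i with ha
  have hamem : ∀ i, a i ∈ D i := by
    intro i
    have := (hac (D i) (hclassmem i)).1 i
      (Finset.mem_filter.2 ⟨Finset.mem_univ i, rfl⟩)
    exact this
  refine ⟨a, hamem, ?_⟩
  have hmaps : ∀ i ∈ Finset.univ (α := Fin n), D i ∈ classes := fun i _ => hclassmem i
  have hsplit1 : ∑ i, lam i • cc i
      = ∑ c ∈ classes, ∑ i ∈ Finset.univ.filter (fun i => D i = c), lam i • cc i :=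
    (Finset.sum_fiberwise_of_maps_to hmaps _).symm
  have hsplit2 : ∑ i, lam i • a i
      = ∑ c ∈ classes, ∑ i ∈ Finset.univ.filter (fun i => D i = c), lam i • a i :=
    (Finset.sum_fiberwise_of_maps_to hmaps _).symm
  rw [hsplit1, hsplit2, ← Finset.sum_sub_distrib]
  have hclasscard : (classes.card : ℝ) ≤ 2 ^ G.card := by
    have hsub : classes ⊆ G.powerset := by
      intro c hc
      obtain ⟨i₀, _, hi₀⟩ := Finset.mem_image.1 hc
      exact Finset.mem_powerset.2 (hi₀ ▸ hDG i₀)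
    calc (classes.card : ℝ) ≤ (G.powerset.card : ℝ) := by
          exact_mod_cast Finset.card_le_card hsub
      _ = 2 ^ G.card := by rw [Finset.card_powerset]; push_cast; ring
  calc ‖∑ c ∈ classes, ((∑ i ∈ Finset.univ.filter (fun i => D i = c), lam i • cc i)
          - ∑ i ∈ Finset.univ.filter (fun i => D i = c), lam i • a i)‖
      ≤ ∑ c ∈ classes, ‖(∑ i ∈ Finset.univ.filter (fun i => D i = c), lam i • cc i)
          - ∑ i ∈ Finset.univ.filter (fun i => D i = c), lam i • a i‖ := norm_sum_le _ _
    _ ≤ ∑ c ∈ classes, 3 ^ G.card * δ * R := by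
        apply Finset.sum_le_sum
        intro c hc
        have hsame : ∑ i ∈ Finset.univ.filter (fun i => D i = c), lam i • a i
            = ∑ i ∈ Finset.univ.filter (fun i => D i = c), lam i • ac c i := by
          apply Finset.sum_congr rfl
          intro i hi
          have hDi : D i = c := (Finset.mem_filter.1 hi).2
          show lam i • ac (D i) i = lam i • ac c i
          rw [hDi]
        rw [hsame]
        exact (hac c hc).2
    _ = (classes.card : ℝ) * (3 ^ G.card * δ * R) := by
        rw [Finset.sum_const, nsmul_eq_mul]
    _ ≤ 2 ^ G.card * (3 ^ G.card * δ * R) := by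
        apply mul_le_mul_of_nonneg_right hclasscard (by positivity)
    _ = 2 ^ G.card * 3 ^ G.card * δ * R := by ring

end GridApprox

section Net

variable {X : Type*} [NormedAddCommGroup X] [NormedSpace ℝ X]

lemma exists_net {K : Set X} (hK : IsCompact K) {η : ℝ} (hη : 0 < η) :
    ∃ G : Finset X, (↑G ⊆ K) ∧ ∀ x ∈ K, ∃ g ∈ G, dist x g ≤ η := by
  classical
  obtain ⟨t, hts, htf, hcover⟩ := finite_cover_balls_of_compact hK hη
  refine ⟨htf.toFinset, by simpa using hts, ?_⟩
  intro x hx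
  obtain ⟨g, hg, hxg⟩ := Set.mem_iUnion₂.1 (hcover hx)
  exact ⟨g, htf.mem_toFinset.2 hg, le_of_lt (Metric.mem_ball.1 hxg)⟩

end Net

section KeyLemma

variable {X : Type*} [NormedAddCommGroup X] [NormedSpace ℝ X] [CompleteSpace X]

/-- Key approximation lemma: along a sequence of partitions of vanishing mesh whose
convexified Riemann sums converge to a compact set, the Hausdorff distance between the
Riemann sums and their convex hulls tends to zero. -/
lemma key_approx
    (hAP : ∀ K : Set X, IsCompact K → ∀ ε : ℝ, 0 < ε →
      ∃ T : X →L[ℝ] X, FiniteDimensional ℝ (LinearMap.range (T : X →ₗ[ℝ] X)) ∧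
        ∀ x ∈ K, ‖T x - x‖ < ε)
    (F : ℝ → Set X) (M : ℝ) (hM : 0 ≤ M)
    (hFne : ∀ t ∈ Set.Icc (0:ℝ) 1, (F t).Nonempty)
    (hFbdd : ∀ t ∈ Set.Icc (0:ℝ) 1, ∀ a ∈ F t, ‖a‖ ≤ M)
    (A' : Set X) (hA' : IsCompact A')
    (P : ℕ → TaggedPartition)
    (hmesh : Filter.Tendsto (fun k => (P k).mesh) Filter.atTop (nhds 0))
    (hconv : Filter.Tendsto
      (fun k => EMetric.hausdorffEdist (convexHull ℝ (msum F (P k))) A')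
      Filter.atTop (nhds 0)) :
    Filter.Tendsto
      (fun k => EMetric.hausdorffEdist (msum F (P k)) (convexHull ℝ (msum F (P k))))
      Filter.atTop (nhds 0) := by
  classical
  apply tendsto_zero_of_forall
  intro r hr
  -- the finite-rank operator from the approximation property
  obtain ⟨T, hTfd, hTap⟩ := hAP A' hA' (r / 10) (by linarith)
  set V := LinearMap.range (T : X →ₗ[ℝ] X) with hV
  haveI : FiniteDimensional ℝ V := hTfd
  set R : ℝ := (‖T‖ + 1) * (M + 1) with hR
  have hTnn : 0 ≤ ‖T‖ := norm_nonneg _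
  have hRpos : 0 < R := by positivity
  -- a compact set containing all relevant images
  set K : Set X := Subtype.val '' (Metric.closedBall (0 : V) R) with hK
  have hKcpt : IsCompact K := (isCompact_closedBall (0 : V) R).image continuous_subtype_val
  have hKnorm : ∀ x ∈ K, ‖x‖ ≤ R := by
    rintro x ⟨v, hv, rfl⟩
    rw [Metric.mem_closedBall, dist_zero_right] at hv
    exact hv
  have hKmem : ∀ y : X, y ∈ V → ‖y‖ ≤ R → y ∈ K := by
    intro y hy hyn
    exact ⟨⟨y, hy⟩, by rwa [Metric.mem_closedBall, dist_zero_right], rfl⟩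
  -- finite η-net of K
  set η : ℝ := r / 10 with hη
  have hηpos : 0 < η := by rw [hη]; linarith
  obtain ⟨G, hGK, hGnet⟩ := exists_net hKcpt hηpos
  set C : ℝ := 2 ^ G.card * 3 ^ G.card * R with hC
  have hCpos : 0 < C := by positivity
  set δ₀ : ℝ := r / (10 * (C + 1)) with hδ₀
  have hδ₀pos : 0 < δ₀ := by rw [hδ₀]; positivity
  set δ₁ : ℝ := r / (10 * (‖T‖ + 1)) with hδ₁
  have hδ₁pos : 0 < δ₁ := by rw [hδ₁]; positivity
  have hmesh' : ∀ᶠ k in Filter.atTop, (P k).mesh < δ₀ :=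
    hmesh.eventually_lt_const hδ₀pos
  have hconv' : ∀ᶠ k in Filter.atTop,
      EMetric.hausdorffEdist (convexHull ℝ (msum F (P k))) A' ≤ ENNReal.ofReal δ₁ :=
    ENNReal.tendsto_nhds_zero.1 hconv _ (by simp [ENNReal.ofReal_pos, hδ₁pos])
  filter_upwards [hmesh', hconv'] with k hkmesh hkconv
  set S : Set X := msum F (P k) with hS
  -- bound on ‖T y - y‖ for y in the convex hull of S
  have hTapprox : ∀ y ∈ convexHull ℝ S, ‖T y - y‖ ≤ r / 5 + r / 10 := by
    intro y hy
    have hlt : EMetric.hausdorffEdist (convexHull ℝ S) A' < ENNReal.ofReal (2 * δ₁) :=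
      lt_of_le_of_lt hkconv (by
        rw [ENNReal.ofReal_lt_ofReal_iff (by linarith)]
        linarith)
    obtain ⟨u, hu, hdu⟩ := exists_dist_lt_of_haus hy hlt
    have h1 : ‖T (y - u)‖ ≤ ‖T‖ * ‖y - u‖ := T.le_opNorm _
    have h2 : ‖T u - u‖ < r / 10 := hTap u hu
    have h3 : ‖y - u‖ < 2 * δ₁ := by rwa [← dist_eq_norm]
    have hTyu : T y - y = T (y - u) + (T u - u) + (u - y) := by
      rw [map_sub]; abel
    calc ‖T y - y‖ = ‖T (y - u) + (T u - u) + (u - y)‖ := by rw [hTyu]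
      _ ≤ ‖T (y - u)‖ + ‖T u - u‖ + ‖u - y‖ := norm_add₃_le
      _ ≤ ‖T‖ * ‖y - u‖ + r / 10 + ‖y - u‖ := by
          rw [norm_sub_rev u y]; linarith
      _ ≤ ‖T‖ * (2 * δ₁) + r / 10 + 2 * δ₁ := by
          have := mul_le_mul_of_nonneg_left h3.le hTnn
          linarith
      _ = 2 * δ₁ * (‖T‖ + 1) + r / 10 := by ring
      _ = r / 5 + r / 10 := by
          rw [hδ₁]
          field_simp
          ring
  -- goal reduction
  apply haus_le_ofReal hr.le
  · intro x hx
    exact ⟨x, subset_convexHull ℝ S hx, by simp [hr.le]⟩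
  intro x hx
  -- decompose x as a weighted sum of points of convex hulls
  have hx' : x ∈ msum (fun t => convexHull ℝ (F t)) (P k) := by
    rwa [msum_convexHull]
  rw [mem_msum] at hx'
  obtain ⟨c, hcmem, hxsum⟩ := hx'
  set lam : Fin (P k).n → ℝ := fun i => (P k).pt i.succ - (P k).pt i.castSucc with hlam
  have hlam0 : ∀ i, 0 ≤ lam i := fun i => (P k).len_nonneg i
  have hlamδ : ∀ i, lam i ≤ δ₀ := fun i => le_trans ((P k).len_le_mesh i) hkmesh.le
  have hlamsum : ∑ i, lam i = 1 := (P k).sum_len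
  -- images of values under T are within η of grid points
  have hTa_mem : ∀ i : Fin (P k).n, ∀ a ∈ F ((P k).tag i), T a ∈ K := by
    intro i a ha
    apply hKmem
    · exact LinearMap.mem_range.2 ⟨a, rfl⟩
    · have h1 : ‖a‖ ≤ M := hFbdd _ ((P k).tag_mem_Icc i) a ha
      calc ‖T a‖ ≤ ‖T‖ * ‖a‖ := T.le_opNorm a
        _ ≤ ‖T‖ * M := mul_le_mul_of_nonneg_left h1 hTnn
        _ ≤ (‖T‖ + 1) * (M + 1) := by nlinarith
  set D : Fin (P k).n → Finset X := fun i =>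
    G.filter (fun g => ∃ a ∈ F ((P k).tag i), dist (T a) g ≤ η) with hD
  have hDG : ∀ i, D i ⊆ G := fun i => Finset.filter_subset _ _
  have hDnet : ∀ i : Fin (P k).n, ∀ y ∈ (T : X → X) '' F ((P k).tag i),
      ∃ g ∈ (D i : Set X), dist y g ≤ η := by
    rintro i y ⟨a, ha, rfl⟩
    obtain ⟨g, hgG, hgd⟩ := hGnet (T a) (hTa_mem i a ha)
    exact ⟨g, Finset.mem_coe.2 (Finset.mem_filter.2 ⟨hgG, a, ha, hgd⟩), hgd⟩
  have hDne : ∀ i, (D i).Nonempty := by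
    intro i
    obtain ⟨a, ha⟩ := hFne _ ((P k).tag_mem_Icc i)
    obtain ⟨g, hg, _⟩ := hDnet i (T a) ⟨a, ha, rfl⟩
    exact ⟨g, hg⟩
  have hDprop : ∀ i, ∀ g ∈ D i, ∃ a ∈ F ((P k).tag i), dist (T a) g ≤ η := by
    intro i g hg
    exact (Finset.mem_filter.1 hg).2
  -- T (c i) lies in the convex hull of the image, approximate it in conv (D i)
  have hTc : ∀ i : Fin (P k).n, T (c i) ∈ convexHull ℝ ((T : X → X) '' F ((P k).tag i)) := by
    intro i
    have h1 := (T : X →ₗ[ℝ] X).image_convexHull (F ((P k).tag i))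
    rw [ContinuousLinearMap.coe_coe] at h1
    rw [← h1]
    exact Set.mem_image_of_mem _ (hcmem i)
  have hc' : ∀ i : Fin (P k).n, ∃ c', c' ∈ convexHull ℝ ((D i : Set X)) ∧
      dist (T (c i)) c' ≤ η := by
    intro i
    obtain ⟨c', hc'm, hc'd⟩ := convexHull_approx hηpos.le (hDnet i) _ (hTc i)
    exact ⟨c', hc'm, hc'd⟩
  choose c' hc'mem hc'dist using hc'
  -- grid approximation (Shapley–Folkman substitute)
  obtain ⟨a', ha'mem, ha'sum⟩ := grid_approx G R δ₀
    (fun g hg => hKnorm g (hGK hg)) hRpos.le hδ₀pos.le lam hlam0 hlamδ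
    D hDG hDne c' hc'mem
  -- pull grid points back to values of F
  have haex : ∀ i : Fin (P k).n, ∃ a ∈ F ((P k).tag i), dist (T a) (a' i) ≤ η :=
    fun i => hDprop i (a' i) (ha'mem i)
  choose a hamem hadist using haex
  set z : X := ∑ i, lam i • a i with hz
  have hzS : z ∈ S := mem_msum.2 ⟨a, hamem, rfl⟩
  refine ⟨z, hzS, ?_⟩
  -- the chain of estimates
  have hsum1 : ‖(∑ i, lam i • T (c i)) - ∑ i, lam i • c' i‖ ≤ η := by
    rw [← Finset.sum_sub_distrib]
    calc ‖∑ i, (lam i • T (c i) - lam i • c' i)‖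
        ≤ ∑ i, ‖lam i • T (c i) - lam i • c' i‖ := norm_sum_le _ _
      _ ≤ ∑ i, lam i * η := by
          apply Finset.sum_le_sum
          intro i _
          rw [← smul_sub, norm_smul, Real.norm_eq_abs, abs_of_nonneg (hlam0 i)]
          exact mul_le_mul_of_nonneg_left
            (by rw [← dist_eq_norm]; exact hc'dist i) (hlam0 i)
      _ = η := by rw [← Finset.sum_mul, hlamsum, one_mul]
  have hsum2 : ‖(∑ i, lam i • a' i) - ∑ i, lam i • T (a i)‖ ≤ η := by
    rw [← Finset.sum_sub_distrib]
    calc ‖∑ i, (lam i • a' i - lam i • T (a i))‖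
        ≤ ∑ i, ‖lam i • a' i - lam i • T (a i)‖ := norm_sum_le _ _
      _ ≤ ∑ i, lam i * η := by
          apply Finset.sum_le_sum
          intro i _
          rw [← smul_sub, norm_smul, Real.norm_eq_abs, abs_of_nonneg (hlam0 i)]
          apply mul_le_mul_of_nonneg_left _ (hlam0 i)
          rw [norm_sub_rev, ← dist_eq_norm]
          exact hadist i
      _ = η := by rw [← Finset.sum_mul, hlamsum, one_mul]
  have hTx : T x = ∑ i, lam i • T (c i) := by
    rw [hxsum, map_sum]
    apply Finset.sum_congr rfl
    intro i _
    rw [map_smul]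
  have hTz : T z = ∑ i, lam i • T (a i) := by
    rw [hz, map_sum]
    apply Finset.sum_congr rfl
    intro i _
    rw [map_smul]
  have hxTx : ‖T x - x‖ ≤ r / 5 + r / 10 := hTapprox x hx
  have hzTz : ‖T z - z‖ ≤ r / 5 + r / 10 := hTapprox z (subset_convexHull ℝ S hzS)
  have hmid : ‖(∑ i, lam i • c' i) - ∑ i, lam i • a' i‖ ≤ r / 10 := by
    have h1 : (2:ℝ) ^ G.card * 3 ^ G.card * δ₀ * R = C * δ₀ := by rw [hC]; ring
    have hC1 : (0:ℝ) < C + 1 := by linarith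
    have h2 : C * δ₀ ≤ r / 10 := by
      rw [hδ₀]
      have heq : C * (r / (10 * (C + 1))) = r / 10 * (C / (C + 1)) := by
        field_simp
      rw [heq]
      have hfrac : C / (C + 1) ≤ 1 := by
        rw [div_le_one hC1]; linarith
      exact mul_le_of_le_one_right (by linarith) hfrac
    calc ‖(∑ i, lam i • c' i) - ∑ i, lam i • a' i‖
        ≤ 2 ^ G.card * 3 ^ G.card * δ₀ * R := ha'sum
      _ = C * δ₀ := h1
      _ ≤ r / 10 := h2
  rw [dist_eq_norm, norm_sub_rev]
  have hdecomp : x - z = -(T x - x) + ((T x - ∑ i, lam i • c' i)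
      + ((∑ i, lam i • c' i) - ∑ i, lam i • a' i)
      + ((∑ i, lam i • a' i) - T z)) + (T z - z) := by abel
  calc ‖x - z‖ ≤ ‖T x - x‖ + (‖T x - ∑ i, lam i • c' i‖
        + ‖(∑ i, lam i • c' i) - ∑ i, lam i • a' i‖
        + ‖(∑ i, lam i • a' i) - T z‖) + ‖T z - z‖ := by
        rw [hdecomp]
        refine le_trans (norm_add₃_le) ?_
        gcongr
        · rw [norm_neg]
        · exact norm_add₃_le
    _ ≤ (r / 5 + r / 10) + (η + r / 10 + η) + (r / 5 + r / 10) := by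
        have e1 : ‖T x - ∑ i, lam i • c' i‖ ≤ η := by rw [hTx]; exact hsum1
        have e2 : ‖(∑ i, lam i • a' i) - T z‖ ≤ η := by rw [hTz]; exact hsum2
        gcongr
    _ ≤ r := by rw [hη]; linarith

end KeyLemma

/-- The set `I(F)` of limits of Riemann integral sums of a multifunction `F`:
all closed nonempty subsets that are Hausdorff-distance limits of sequences of Riemann
sums along sequences of tagged partitions whose diameters tend to `0`. -/
def limitSets {X : Type*} [NormedAddCommGroup X] [NormedSpace ℝ X]
    (F : ℝ → Set X) : Set (Set X) :=
  {A | A.Nonempty ∧ IsClosed A ∧ ∃ P : ℕ → TaggedPartition,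
    Tendsto (fun k => (P k).mesh) atTop (nhds 0) ∧
    Tendsto (fun k => EMetric.hausdorffEdist (msum F (P k)) A) atTop (nhds 0)}

/-- In a Banach space with the approximation property, every compact-valued bounded
multifunction `F` on `[0,1]` satisfies `I(F) = I(conv F)`. -/
theorem limitSets_eq_limitSets_convexHull_of_approximation_property
    {X : Type*} [NormedAddCommGroup X] [NormedSpace ℝ X] [CompleteSpace X]
    (hAP : ∀ K : Set X, IsCompact K → ∀ ε : ℝ, 0 < ε →
      ∃ T : X →L[ℝ] X, FiniteDimensional ℝ (LinearMap.range (T : X →ₗ[ℝ] X)) ∧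
        ∀ x ∈ K, ‖T x - x‖ < ε)
    (F : ℝ → Set X)
    (hFne : ∀ t ∈ Set.Icc (0 : ℝ) 1, (F t).Nonempty)
    (hFcpt : ∀ t ∈ Set.Icc (0 : ℝ) 1, IsCompact (F t))
    (hFbdd : ∃ M : ℝ, ∀ t ∈ Set.Icc (0 : ℝ) 1, ∀ a ∈ F t, ‖a‖ ≤ M) :
    limitSets F = limitSets (fun t => convexHull ℝ (F t)) := by
  obtain ⟨M, hM⟩ := hFbdd
  set M' : ℝ := max M 0 with hM'
  have hM'0 : 0 ≤ M' := le_max_right _ _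
  have hFbdd' : ∀ t ∈ Set.Icc (0:ℝ) 1, ∀ a ∈ F t, ‖a‖ ≤ M' :=
    fun t ht a ha => le_trans (hM t ht a ha) (le_max_left _ _)
  have hScpt : ∀ P : TaggedPartition, IsCompact (msum F P) :=
    fun P => isCompact_msum F P hFcpt
  have hSne : ∀ P : TaggedPartition, (msum F P).Nonempty :=
    fun P => msum_nonempty P hFne
  ext A
  simp only [limitSets, Set.mem_setOf_eq]
  constructor
  · rintro ⟨hAne, hAcl, P, hmesh, hlim⟩
    refine ⟨hAne, hAcl, P, hmesh, ?_⟩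
    -- A is totally bounded
    have htbA : TotallyBounded A := by
      apply totallyBounded_of_haus (fun k => (hScpt (P k)).totallyBounded)
      intro r hr
      have hev := ENNReal.tendsto_nhds_zero.1 hlim (ENNReal.ofReal (r/2))
        (by rw [gt_iff_lt, ENNReal.ofReal_pos]; linarith)
      obtain ⟨k, hk⟩ := hev.exists
      refine ⟨k, lt_of_le_of_lt hk ?_⟩
      rw [ENNReal.ofReal_lt_ofReal_iff hr]
      linarith
    set A' : Set X := closure (convexHull ℝ A) with hA'
    have hA'cpt : IsCompact A' := TotallyBounded.isCompact_of_isClosed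
      (totallyBounded_convexHull.2 htbA).closure isClosed_closure
    -- convexified sums converge to A'
    have hconv : Tendsto
        (fun k => EMetric.hausdorffEdist (convexHull ℝ (msum F (P k))) A')
        atTop (nhds 0) := by
      apply tendsto_zero_of_forall
      intro r hr
      have hev := ENNReal.tendsto_nhds_zero.1 hlim (ENNReal.ofReal (r/2))
        (by rw [gt_iff_lt, ENNReal.ofReal_pos]; linarith)
      filter_upwards [hev] with k hk
      have hklt : EMetric.hausdorffEdist (msum F (P k)) A < ENNReal.ofReal r :=
        lt_of_le_of_lt hk (by rw [ENNReal.ofReal_lt_ofReal_iff hr]; linarith)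
      have h1 : ∀ x ∈ msum F (P k), ∃ y ∈ A, dist x y ≤ r := by
        intro x hx
        obtain ⟨y, hy, hd⟩ := exists_dist_lt_of_haus hx hklt
        exact ⟨y, hy, hd.le⟩
      have h2 : ∀ y ∈ A, ∃ x ∈ msum F (P k), dist y x ≤ r := by
        intro y hy
        have : EMetric.hausdorffEdist A (msum F (P k)) < ENNReal.ofReal r := by
          exact (Metric.hausdorffEDist_comm).trans_lt hklt
        obtain ⟨x, hx, hd⟩ := exists_dist_lt_of_haus hy this
        exact ⟨x, hx, hd.le⟩
      have hc1 := convexHull_approx hr.le h1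
      have hc2 := convexHull_approx hr.le h2
      have hhc : EMetric.hausdorffEdist (convexHull ℝ (msum F (P k)))
          (convexHull ℝ A) ≤ ENNReal.ofReal r := by
        apply haus_le_ofReal hr.le hc1
        intro y hy
        obtain ⟨x, hx, hd⟩ := hc2 y hy
        exact ⟨x, hx, by rwa [dist_comm]⟩
      rw [hA']
      exact (Metric.hausdorffEDist_closure_right).trans_le hhc
    -- key approximation lemma
    have hkey := key_approx hAP F M' hM'0 hFne hFbdd' A' hA'cpt P hmesh hconv
    have hkey' : Tendsto
        (fun k => EMetric.hausdorffEdist (convexHull ℝ (msum F (P k))) (msum F (P k)))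
        atTop (nhds 0) := by
      convert hkey using 2 with k
      exact EMetric.hausdorffEdist_comm
    apply tendsto_zero_of_le_add hkey' hlim
    intro k
    calc EMetric.hausdorffEdist (msum (fun t => convexHull ℝ (F t)) (P k)) A
        = EMetric.hausdorffEdist (convexHull ℝ (msum F (P k))) A := by
          rw [msum_convexHull]
      _ ≤ EMetric.hausdorffEdist (convexHull ℝ (msum F (P k))) (msum F (P k))
          + EMetric.hausdorffEdist (msum F (P k)) A := EMetric.hausdorffEdist_triangle
  · rintro ⟨hAne, hAcl, P, hmesh, hlim⟩
    refine ⟨hAne, hAcl, P, hmesh, ?_⟩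
    have hlim' : Tendsto
        (fun k => EMetric.hausdorffEdist (convexHull ℝ (msum F (P k))) A)
        atTop (nhds 0) := by
      convert hlim using 2 with k
      rw [msum_convexHull]
    have htbA : TotallyBounded A := by
      apply totallyBounded_of_haus
        (fun k => totallyBounded_convexHull.2 (hScpt (P k)).totallyBounded)
      intro r hr
      have hev := ENNReal.tendsto_nhds_zero.1 hlim' (ENNReal.ofReal (r/2))
        (by rw [gt_iff_lt, ENNReal.ofReal_pos]; linarith)
      obtain ⟨k, hk⟩ := hev.exists
      refine ⟨k, lt_of_le_of_lt hk ?_⟩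
      rw [ENNReal.ofReal_lt_ofReal_iff hr]
      linarith
    have hAcpt : IsCompact A := TotallyBounded.isCompact_of_isClosed htbA hAcl
    have hkey := key_approx hAP F M' hM'0 hFne hFbdd' A hAcpt P hmesh hlim'
    apply tendsto_zero_of_le_add hkey hlim'
    intro k
    exact EMetric.hausdorffEdist_triangle
end

section
/- Let X = L^1([0,1]) (real Lebesgue space). There exists a bounded multifunction F : [0,1] → 2^X \ {∅} such that some element A ∈ I(F) is not a convex set. -/
open Pointwise Filter Metric Set

/-- The real Lebesgue space `L¹([0,1])`. -/
noncomputable abbrev L1unit : Type :=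
  MeasureTheory.Lp ℝ 1 ((MeasureTheory.volume : MeasureTheory.Measure ℝ).restrict (Set.Icc 0 1))

/- ----------------------------------------------------------------------- -/
/- Auxiliary material for the construction.                                 -/
/- ----------------------------------------------------------------------- -/

open MeasureTheory

noncomputable abbrev μ01 : Measure ℝ := (volume : Measure ℝ).restrict (Set.Icc 0 1)

instance : IsFiniteMeasure μ01 := by
  constructor
  rw [Measure.restrict_apply_univ]
  simp [Real.volume_Icc]

/-- The indicator of a measurable set as an element of L¹([0,1]). -/
noncomputable def indE (E : Set ℝ) (hE : MeasurableSet E) : L1unit :=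
  indicatorConstLp 1 hE (measure_ne_top μ01 E) (1:ℝ)

lemma indE_congr {E E' : Set ℝ} (h : E = E') (hE : MeasurableSet E) (hE' : MeasurableSet E') :
    indE E hE = indE E' hE' := by subst h; rfl

/-- Indicators of measurable subsets of `S`, as a subset of L¹([0,1]). -/
def IndIn (S : Set ℝ) : Set L1unit :=
  {f | ∃ (E : Set ℝ) (hE : MeasurableSet E), E ⊆ S ∧ f = indE E hE}

lemma indE_empty : indE ∅ MeasurableSet.empty = 0 := by
  simp [indE]

lemma zero_mem_IndIn (S : Set ℝ) : (0 : L1unit) ∈ IndIn S :=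
  ⟨∅, MeasurableSet.empty, empty_subset _, indE_empty.symm⟩

lemma IndIn_empty : IndIn (∅ : Set ℝ) = 0 := by
  ext f
  constructor
  · rintro ⟨E, hE, hsub, rfl⟩
    have : E = ∅ := subset_empty_iff.mp hsub
    subst this
    simpa using indE_empty
  · intro hf
    rw [Set.mem_zero] at hf
    subst hf
    exact zero_mem_IndIn _

lemma indE_union {E E' : Set ℝ} (hE : MeasurableSet E) (hE' : MeasurableSet E')
    (hd : Disjoint E E') :
    indE (E ∪ E') (hE.union hE') = indE E hE + indE E' hE' := by
  simpa [indE] using indicatorConstLp_disjoint_union (p := 1) (μ := μ01) hE hE'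
    (measure_ne_top μ01 E) (measure_ne_top μ01 E') hd (1:ℝ)

lemma IndIn_add_IndIn {S T : Set ℝ} (hS : MeasurableSet S) (hd : Disjoint S T) :
    IndIn S + IndIn T = IndIn (S ∪ T) := by
  ext f
  constructor
  · rintro hf
    rw [Set.mem_add] at hf
    obtain ⟨g, hg, g', hg', rfl⟩ := hf
    obtain ⟨E, hE, hEs, rfl⟩ := hg
    obtain ⟨E', hE', hEs', rfl⟩ := hg'
    exact ⟨E ∪ E', hE.union hE', union_subset_union hEs hEs',
      (indE_union hE hE' (hd.mono hEs hEs')).symm⟩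
  · rintro ⟨E, hE, hEs, rfl⟩
    rw [Set.mem_add]
    refine ⟨indE (E ∩ S) (hE.inter hS), ⟨E ∩ S, hE.inter hS, inter_subset_right, rfl⟩,
      indE (E \ S) (hE.diff hS), ⟨E \ S, hE.diff hS, ?_, rfl⟩, ?_⟩
    · intro x hx
      rcases hEs hx.1 with h | h
      · exact absurd h hx.2
      · exact h
    · rw [← indE_union (hE.inter hS) (hE.diff hS)
        (disjoint_sdiff_right.mono_left inter_subset_right)]
      exact indE_congr (by simp) _ _

lemma sum_IndIn_blocks (N : ℝ) (hn : 0 < N) (m : ℕ) :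
    ∑ i ∈ Finset.range m, IndIn (Set.Ico ((i:ℝ)/N) (((i:ℝ)+1)/N)) =
      IndIn (Set.Ico 0 ((m:ℝ)/N)) := by
  induction m with
  | zero => simp [IndIn_empty]
  | succ m ih =>
    rw [Finset.sum_range_succ, ih,
      IndIn_add_IndIn measurableSet_Ico Set.Ico_disjoint_Ico_same]
    push_cast
    rw [Set.Ico_union_Ico_eq_Ico (by positivity)
      (div_le_div_of_nonneg_right (by linarith) hn.le)]

/- The midpoint coding of pairs `(k, j)` into tags. -/

lemma nat_key : ∀ k k' j j' : ℕ, (2*j+1)*2^(k+1) = (2*j'+1)*2^(k'+1) → k = k' ∧ j = j' := by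
  intro k
  induction k with
  | zero =>
    intro k' j j' h
    cases k' with
    | zero => constructor <;> omega
    | succ s =>
      exfalso
      have e : (2*j'+1)*2^(s+1+1) = ((2*j'+1)*2^(s+1))*2 := by ring
      have e0 : (2*j+1)*2^(0+1) = (2*j+1)*2 := by ring
      have h2 : 2*j+1 = (2*j'+1)*2^(s+1) := by omega
      have : (2*j'+1)*2^(s+1) = 2*((2*j'+1)*2^s) := by ring
      omega
  | succ m ih =>
    intro k' j j' h
    cases k' with
    | zero =>
      exfalso
      have h2 : (2*j+1)*2^(m+1) = 2*j'+1 := by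
        have : ((2*j+1)*2^(m+1))*2 = (2*j'+1)*2 := by
          have e : (2*j+1)*2^(m+1+1) = ((2*j+1)*2^(m+1))*2 := by ring
          omega
        omega
      have : (2*j+1)*2^(m+1) = 2*((2*j+1)*2^m) := by ring
      omega
    | succ s =>
      have h2 : (2*j+1)*2^(m+1) = (2*j'+1)*2^(s+1) := by
        have e1 : (2*j+1)*2^(m+1+1) = ((2*j+1)*2^(m+1))*2 := by ring
        have e2 : (2*j'+1)*2^(s+1+1) = ((2*j'+1)*2^(s+1))*2 := by ring
        omega
      have := ih s j j' h2
      omega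

noncomputable def code (k j : ℕ) : ℝ := (2*(j:ℝ)+1)/2^(k+1)

lemma code_mem (k j : ℕ) : code k j ∈ Set.Icc ((j:ℝ)/2^k) (((j:ℝ)+1)/2^k) := by
  unfold code
  have h : (0:ℝ) < 2^k := by positivity
  constructor
  · rw [div_le_div_iff₀ h (by positivity), pow_succ]
    nlinarith
  · rw [div_le_div_iff₀ (by positivity) h, pow_succ]
    nlinarith

lemma code_inj {k j k' j' : ℕ} (h : code k j = code k' j') : k = k' ∧ j = j' := by
  unfold code at h
  rw [div_eq_div_iff (by positivity) (by positivity)] at h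
  have h' : ((2*j+1)*2^(k'+1) : ℕ) = ((2*j'+1)*2^(k+1) : ℕ) := by
    exact_mod_cast h
  have := nat_key k' k j j' (by omega)
  exact ⟨this.1.symm, this.2⟩

/-- The dyadic uniform tagged partition with `2^k` intervals, tagged at midpoints. -/
noncomputable def Pk (k : ℕ) : TaggedPartition where
  n := 2^k
  pt i := (i : ℝ) / 2^k
  tag j := code k j
  pt_zero := by simp
  pt_last := by simp [Fin.last]
  pt_mono := by
    intro a b hab
    have h : ((a:ℕ):ℝ) ≤ ((b:ℕ):ℝ) := by exact_mod_cast (Fin.le_iff_val_le_val.mp hab)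
    exact div_le_div_of_nonneg_right h (by positivity) |>.trans_eq rfl
  tag_mem := by
    intro i
    have := code_mem k i
    simpa [Fin.coe_castSucc, Fin.val_succ] using this

lemma Pk_mesh (k : ℕ) : (Pk k).mesh = 1/2^k := by
  have h : ∀ i : Fin (2^k), ((Pk k).pt i.succ - (Pk k).pt i.castSucc) = 1/2^k := by
    intro i
    show ((i.succ : ℕ) : ℝ)/2^k - ((i.castSucc : ℕ) : ℝ)/2^k = 1/2^k
    rw [Fin.val_succ, Fin.coe_castSucc]
    push_cast
    ring
  unfold TaggedPartition.mesh
  have hne : Nonempty (Fin ((Pk k).n)) :=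
    ⟨⟨0, pow_pos (by norm_num) k⟩⟩
  calc (⨆ i : Fin ((Pk k).n), ((Pk k).pt i.succ - (Pk k).pt i.castSucc))
      = ⨆ _i : Fin ((Pk k).n), (1:ℝ)/2^k := by
        congr 1; funext i; exact h i
    _ = 1/2^k := ciSup_const

/-- The block of the `(k,j)`-th dyadic interval. -/
def Bko (k j : ℕ) : Set ℝ := Set.Ico ((j:ℝ)/2^k) (((j:ℝ)+1)/2^k)

/- The multifunction: at a coded midpoint `code k j` it takes the value
`2^k • IndIn (Bko k j)`, and `{0}` elsewhere. -/
noncomputable def Fm (t : ℝ) : Set L1unit :=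
  haveI := Classical.propDecidable (∃ p : ℕ × ℕ, t = code p.1 p.2)
  if h : ∃ p : ℕ × ℕ, t = code p.1 p.2 then
    ((2:ℝ)^(h.choose.1)) • IndIn (Bko h.choose.1 h.choose.2)
  else {0}

lemma Fm_code (k j : ℕ) : Fm (code k j) = ((2:ℝ)^k) • IndIn (Bko k j) := by
  have hex : ∃ p : ℕ × ℕ, code k j = code p.1 p.2 := ⟨(k,j), rfl⟩
  rw [Fm, dif_pos hex]
  obtain ⟨h1, h2⟩ := code_inj hex.choose_spec
  rw [show hex.choose = (k, j) from Prod.ext h1.symm h2.symm]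

lemma zero_mem_Fm (t : ℝ) : (0 : L1unit) ∈ Fm t := by
  rw [Fm]
  split_ifs with h
  · exact ⟨0, zero_mem_IndIn _, smul_zero _⟩
  · exact rfl

lemma norm_indE (E : Set ℝ) (hE : MeasurableSet E) : ‖indE E hE‖ = (μ01 E).toReal := by
  rw [indE, norm_indicatorConstLp one_ne_zero ENNReal.one_ne_top]
  simp
  rfl

lemma Fm_bound (t : ℝ) (a : L1unit) (ha : a ∈ Fm t) : ‖a‖ ≤ 1 := by
  rw [Fm] at ha
  split_ifs at ha with h
  · obtain ⟨f, hf, rfl⟩ := ha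
    obtain ⟨E, hE, hEsub, rfl⟩ := hf
    set m := h.choose.1
    set j := h.choose.2
    rw [norm_smul, Real.norm_eq_abs, abs_of_pos (by positivity : (0:ℝ) < 2^m), norm_indE]
    have h1 : μ01 E ≤ ENNReal.ofReal (1/2^m) := by
      calc μ01 E ≤ volume E := Measure.le_iff'.1 Measure.restrict_le_self E
        _ ≤ volume (Bko m j) := measure_mono hEsub
        _ = ENNReal.ofReal (1/2^m) := by
            rw [Bko, Real.volume_Ico]
            congr 1
            ring
    have h2 : (μ01 E).toReal ≤ 1/2^m :=
      le_trans (ENNReal.toReal_mono ENNReal.ofReal_ne_top h1)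
        (le_of_eq (ENNReal.toReal_ofReal (by positivity)))
    calc (2:ℝ)^m * (μ01 E).toReal ≤ 2^m * (1/2^m) := by
          exact mul_le_mul_of_nonneg_left h2 (by positivity)
      _ = 1 := by field_simp
  · rw [Set.mem_singleton_iff] at ha
    simp [ha]

lemma msum_Pk (k : ℕ) : msum Fm (Pk k) = IndIn (Set.Ico 0 1) := by
  have hterm : ∀ i : Fin (2^k),
      ((Pk k).pt i.succ - (Pk k).pt i.castSucc) • Fm ((Pk k).tag i)
        = IndIn (Bko k i) := by
    intro i
    have hc : ((Pk k).pt i.succ - (Pk k).pt i.castSucc) = 1/2^k := by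
      show ((i.succ : ℕ) : ℝ)/2^k - ((i.castSucc : ℕ) : ℝ)/2^k = 1/2^k
      rw [Fin.val_succ, Fin.coe_castSucc]
      push_cast
      ring
    have ht : (Pk k).tag i = code k i := rfl
    rw [hc, ht, Fm_code, smul_smul]
    rw [show (1/2^k) * (2:ℝ)^k = 1 by field_simp, one_smul]
  have : msum Fm (Pk k) = ∑ i : Fin (2^k), IndIn (Bko k i) := by
    rw [msum]
    exact Finset.sum_congr rfl fun i _ => hterm i
  rw [this, Fin.sum_univ_eq_sum_range (fun i => IndIn (Bko k i))]
  have := sum_IndIn_blocks ((2:ℝ)^k) (by positivity) (2^k)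
  simp only [Bko]
  rw [this]
  have hone : (((2:ℕ)^k : ℕ) : ℝ)/(2:ℝ)^k = 1 := by
    push_cast
    exact div_self (by positivity)
  rw [hone]

/-- The limit set: closure of the set of indicators of subsets of `[0,1)`. -/
noncomputable def Aset : Set L1unit := closure (IndIn (Set.Ico 0 1))

lemma ae_mem_Ico : ∀ᵐ x ∂μ01, x ∈ Set.Ico (0:ℝ) 1 := by
  rw [ae_iff]
  have hmeas : μ01 {x | ¬ x ∈ Set.Ico (0:ℝ) 1} = μ01 (Set.Ico (0:ℝ) 1)ᶜ := rfl
  rw [hmeas, Measure.restrict_apply measurableSet_Ico.compl]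
  have : (Set.Ico (0:ℝ) 1)ᶜ ∩ Set.Icc 0 1 = {1} := by
    rw [Set.inter_comm, ← Set.diff_eq, Set.Icc_diff_Ico_same zero_le_one]
  rw [this, Real.volume_singleton]

lemma dist_half (E : Set ℝ) (hE : MeasurableSet E) :
    dist ((1/2 : ℝ) • indE (Set.Ico 0 1) measurableSet_Ico) (indE E hE) = 1/2 := by
  rw [dist_eq_norm, Lp.norm_def]
  have h3 : ⇑(indE (Set.Ico 0 1) measurableSet_Ico) =ᵐ[μ01]
      (Set.Ico (0:ℝ) 1).indicator (fun _ => (1:ℝ)) := indicatorConstLp_coeFn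
  have h4 : ⇑(indE E hE) =ᵐ[μ01] E.indicator (fun _ => (1:ℝ)) := indicatorConstLp_coeFn
  have key : ∀ᵐ x ∂μ01,
      ‖(⇑((1/2 : ℝ) • indE (Set.Ico 0 1) measurableSet_Ico - indE E hE)) x‖
        = ‖(fun _ : ℝ => (1/2 : ℝ)) x‖ := by
    filter_upwards [Lp.coeFn_sub ((1/2 : ℝ) • indE (Set.Ico 0 1) measurableSet_Ico) (indE E hE),
      Lp.coeFn_smul (1/2 : ℝ) (indE (Set.Ico 0 1) measurableSet_Ico),
      h3, h4, ae_mem_Ico] with x e1 e2 e3 e4 hx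
    rw [e1, Pi.sub_apply, e2, Pi.smul_apply, e3, e4, Set.indicator_of_mem hx]
    by_cases hxE : x ∈ E
    · rw [Set.indicator_of_mem hxE]
      norm_num
    · rw [Set.indicator_of_notMem hxE]
      norm_num
  rw [eLpNorm_congr_norm_ae key, eLpNorm_const (1/2 : ℝ) one_ne_zero ?_]
  · simp only [ENNReal.toReal_one, div_one, ENNReal.rpow_one]
    rw [Measure.restrict_apply_univ, Real.volume_Icc]
    norm_num
  · intro h0
    have h0' : μ01 Set.univ = 0 := by rw [h0]; rfl
    rw [Measure.restrict_apply_univ, Real.volume_Icc] at h0'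
    norm_num at h0'

/-- In `X = L¹([0,1])` there is a bounded multifunction `F` on `[0,1]` such that some
element of `I(F)` is not convex. -/
theorem exists_boundedMultifunction_with_nonconvex_limit :
    ∃ F : ℝ → Set L1unit,
      (∀ t ∈ Set.Icc (0 : ℝ) 1, (F t).Nonempty) ∧
      (∃ M : ℝ, ∀ t ∈ Set.Icc (0 : ℝ) 1, ∀ a ∈ F t, ‖a‖ ≤ M) ∧
      ∃ A ∈ limitSets F, ¬ Convex ℝ A := by
  refine ⟨Fm, fun t _ => ⟨0, zero_mem_Fm t⟩, ⟨1, fun t _ a ha => Fm_bound t a ha⟩,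
    Aset, ⟨⟨0, subset_closure (zero_mem_IndIn _)⟩, isClosed_closure, Pk, ?_, ?_⟩, ?_⟩
  · -- mesh tends to 0
    have : (fun k => (Pk k).mesh) = fun k => (1/2 : ℝ)^k := by
      funext k
      rw [Pk_mesh, one_div_pow]
    rw [this]
    exact tendsto_pow_atTop_nhds_zero_of_lt_one (by norm_num) (by norm_num)
  · -- Hausdorff distance tends to 0
    have : (fun k => EMetric.hausdorffEdist (msum Fm (Pk k)) Aset) = fun _ => 0 := by
      funext k
      rw [msum_Pk]
      exact EMetric.hausdorffEdist_self_closure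
    rw [this]
    exact tendsto_const_nhds
  · -- non-convexity
    intro hconv
    have h0 : (0 : L1unit) ∈ Aset := subset_closure (zero_mem_IndIn _)
    have h1 : indE (Set.Ico 0 1) measurableSet_Ico ∈ Aset :=
      subset_closure ⟨Set.Ico 0 1, measurableSet_Ico, le_refl _, rfl⟩
    have hmid : (1/2 : ℝ) • indE (Set.Ico 0 1) measurableSet_Ico ∈ Aset := by
      have := hconv h0 h1 (by norm_num : (0:ℝ) ≤ 1/2) (by norm_num : (0:ℝ) ≤ 1/2) (by norm_num)
      simpa using this
    obtain ⟨g, hgInd, hdist⟩ :=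
      Metric.mem_closure_iff.mp hmid (1/2) (by norm_num)
    obtain ⟨E, hE, hEsub, rfl⟩ := hgInd
    rw [dist_half E hE] at hdist
    exact lt_irrefl _ hdist
end

section
/- Let X be a real Banach space and let f : [0,1] → X be a function whose image f([0,1]) is totally bounded. Then I(f) is a convex subset of X. -/
open Pointwise Filter Metric Set
/-- Riemann integral sum of a (single-valued) function. -/
noncomputable def rsum {X : Type*} [NormedAddCommGroup X] [NormedSpace ℝ X]
    (f : ℝ → X) (P : TaggedPartition) : X :=
  ∑ i : Fin P.n, (P.pt i.succ - P.pt i.castSucc) • f (P.tag i)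

/-- The set `I(f)` of limits of Riemann integral sums of a function `f` along sequences
of tagged partitions whose diameters tend to `0`. -/
def limitPoints {X : Type*} [NormedAddCommGroup X] [NormedSpace ℝ X]
    (f : ℝ → X) : Set X :=
  {x | ∃ P : ℕ → TaggedPartition,
    Tendsto (fun k => (P k).mesh) atTop (nhds 0) ∧
    Tendsto (fun k => rsum f (P k)) atTop (nhds x)}


namespace RiemannAux
variable {X : Type*} [NormedAddCommGroup X] [NormedSpace ℝ X]
abbrev Seg := ℝ × ℝ

def psum (l : List Seg) : ℝ := (l.map Prod.fst).sum

def lsum (g : ℝ → X) (l : List Seg) : X := (l.map (fun e => e.1 • g e.2)).sum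

def Valid : ℝ → List Seg → Prop
  | _, [] => True
  | s, e :: r => 0 ≤ e.1 ∧ s ≤ e.2 ∧ e.2 ≤ s + e.1 ∧ Valid (s + e.1) r

def Fine (δ : ℝ) (l : List Seg) : Prop := ∀ e ∈ l, e.1 ≤ δ

@[simp] lemma psum_nil : psum [] = 0 := rfl
@[simp] lemma psum_cons (e : Seg) (l : List Seg) : psum (e :: l) = e.1 + psum l := by
  simp [psum]
@[simp] lemma psum_append (l₁ l₂ : List Seg) : psum (l₁ ++ l₂) = psum l₁ + psum l₂ := by
  simp [psum]
@[simp] lemma lsum_nil (g : ℝ → X) : lsum g ([] : List Seg) = 0 := rfl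
@[simp] lemma lsum_cons (g : ℝ → X) (e : Seg) (l : List Seg) :
    lsum g (e :: l) = e.1 • g e.2 + lsum g l := by simp [lsum]
@[simp] lemma lsum_append (g : ℝ → X) (l₁ l₂ : List Seg) :
    lsum g (l₁ ++ l₂) = lsum g l₁ + lsum g l₂ := by simp [lsum]

@[simp] lemma valid_nil (s : ℝ) : Valid s [] := trivial
lemma valid_cons {s : ℝ} {e : Seg} {l : List Seg} :
    Valid s (e :: l) ↔ 0 ≤ e.1 ∧ s ≤ e.2 ∧ e.2 ≤ s + e.1 ∧ Valid (s + e.1) l := Iff.rfl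

lemma Valid.len_nonneg {s : ℝ} {l : List Seg} (h : Valid s l) : ∀ e ∈ l, 0 ≤ e.1 := by
  induction l generalizing s with
  | nil => simp
  | cons e r ih =>
    rcases h with ⟨h1, _, _, h4⟩
    intro x hx
    rcases List.mem_cons.1 hx with rfl | hx
    · exact h1
    · exact ih h4 x hx

lemma Valid.psum_nonneg {s : ℝ} {l : List Seg} (h : Valid s l) : 0 ≤ psum l := by
  induction l generalizing s with
  | nil => simp
  | cons e r ih =>
    rcases h with ⟨h1, _, _, h4⟩
    have := ih h4
    simp only [psum_cons]; linarith

lemma valid_append {s : ℝ} {l₁ l₂ : List Seg} (h₁ : Valid s l₁)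
    (h₂ : Valid (s + psum l₁) l₂) : Valid s (l₁ ++ l₂) := by
  induction l₁ generalizing s with
  | nil => simpa using h₂
  | cons e r ih =>
    rcases h₁ with ⟨h1, h2, h3, h4⟩
    refine ⟨h1, h2, h3, ih h4 ?_⟩
    have : s + e.1 + psum r = s + psum (e :: r) := by simp only [psum_cons]; ring
    rw [this]
    exact h₂

lemma fine_append {δ : ℝ} {l₁ l₂ : List Seg} (h₁ : Fine δ l₁) (h₂ : Fine δ l₂) :
    Fine δ (l₁ ++ l₂) := by
  intro e he
  rcases List.mem_append.1 he with h | h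
  · exact h₁ e h
  · exact h₂ e h

lemma valid_tags_mem {s : ℝ} {l : List Seg} (h : Valid s l) :
    ∀ e ∈ l, e.2 ∈ Set.Icc s (s + psum l) := by
  induction l generalizing s with
  | nil => simp
  | cons e r ih =>
    rcases h with ⟨h1, h2, h3, h4⟩
    intro x hx
    have hpr : 0 ≤ psum r := h4.psum_nonneg
    rcases List.mem_cons.1 hx with rfl | hx
    · exact ⟨h2, by simp only [psum_cons]; linarith⟩
    · have := ih h4 x hx
      refine ⟨by linarith [this.1], ?_⟩
      have := this.2
      simp only [psum_cons]; linarith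


/-- Split a valid list at absolute position `gpt`, given its start `s`. -/
noncomputable def splitAt (gpt : ℝ) : ℝ → List Seg → List Seg × List Seg
  | _, [] => ([], [])
  | s, e :: r =>
    if s + e.1 ≤ gpt then
      ((e :: (splitAt gpt (s + e.1) r).1), (splitAt gpt (s + e.1) r).2)
    else
      ([(gpt - s, min e.2 gpt)], ((s + e.1 - gpt, max e.2 gpt)) :: r)

@[simp] lemma splitAt_nil (gpt s : ℝ) : splitAt gpt s [] = ([], []) := by
  simp [splitAt]

lemma splitAt_cons (gpt s : ℝ) (e : Seg) (r : List Seg) :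
    splitAt gpt s (e :: r) =
      if s + e.1 ≤ gpt then
        ((e :: (splitAt gpt (s + e.1) r).1), (splitAt gpt (s + e.1) r).2)
      else
        ([(gpt - s, min e.2 gpt)], ((s + e.1 - gpt, max e.2 gpt)) :: r) := by
  rw [splitAt]

lemma splitAt_spec {gpt : ℝ} {M δ : ℝ} {g : ℝ → X} (hg : ∀ t, ‖g t‖ ≤ M)
    (hδ : 0 ≤ δ) :
    ∀ (l : List Seg) (s : ℝ), Valid s l → s ≤ gpt → gpt ≤ s + psum l → Fine δ l →
      psum (splitAt gpt s l).1 = gpt - s ∧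
      psum (splitAt gpt s l).2 = s + psum l - gpt ∧
      Valid s (splitAt gpt s l).1 ∧
      Valid gpt (splitAt gpt s l).2 ∧
      Fine δ (splitAt gpt s l).1 ∧ Fine δ (splitAt gpt s l).2 ∧
      ‖(lsum g (splitAt gpt s l).1 + lsum g (splitAt gpt s l).2) - lsum g l‖ ≤ 2 * M * δ := by
  intro l
  induction l with
  | nil =>
    intro s _ h1 h2 _
    simp only [psum_nil] at h2
    have hg0 : gpt = s := le_antisymm (by linarith) h1
    subst hg0
    have hM : 0 ≤ M := le_trans (norm_nonneg _) (hg 0)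
    refine ⟨by simp, by simp, trivial, trivial, by intro x hx; simp at hx,
      by intro x hx; simp at hx, ?_⟩
    simp only [splitAt_nil, lsum_nil, add_zero, sub_zero, norm_zero, sub_self]
    exact mul_nonneg (mul_nonneg (by norm_num) hM) hδ
  | cons e r ih =>
    intro s hv hs hle hf
    rcases hv with ⟨h1, h2, h3, h4⟩
    have hM : 0 ≤ M := le_trans (norm_nonneg _) (hg 0)
    by_cases hc : s + e.1 ≤ gpt
    · have hrec := ih (s + e.1) h4 hc (by simp only [psum_cons] at hle; linarith)
        (fun x hx => hf x (by simp [hx]))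
      rw [splitAt_cons, if_pos hc]
      obtain ⟨p1, p2, p3, p4, p5, p6, p7⟩ := hrec
      refine ⟨by simp [p1]; ring, by simp [p2]; ring, ⟨h1, h2, h3, p3⟩, p4, ?_, p6, ?_⟩
      · intro x hx
        rcases List.mem_cons.1 hx with rfl | hx
        · exact hf x (by simp)
        · exact p5 x hx
      · simp only [lsum_cons]
        calc ‖e.1 • g e.2 + lsum g (splitAt gpt (s + e.1) r).1 +
              lsum g (splitAt gpt (s + e.1) r).2 - (e.1 • g e.2 + lsum g r)‖
            = ‖(lsum g (splitAt gpt (s + e.1) r).1 + lsum g (splitAt gpt (s + e.1) r).2)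
                - lsum g r‖ := by congr 1; abel
          _ ≤ 2 * M * δ := p7
    · push_neg at hc
      rw [splitAt_cons, if_neg (not_le.2 hc)]
      have he1 : e.1 ≤ δ := hf e (by simp)
      have hb : ∀ t₁ t₂ : ℝ, ‖g t₁ - g t₂‖ ≤ 2 * M := fun t₁ t₂ => by
        calc ‖g t₁ - g t₂‖ ≤ ‖g t₁‖ + ‖g t₂‖ := norm_sub_le _ _
          _ ≤ 2 * M := by linarith [hg t₁, hg t₂]
      refine ⟨by simp, by simp [psum_cons]; ring, ?_, ?_, ?_, ?_, ?_⟩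
      · refine ⟨show (0:ℝ) ≤ gpt - s by linarith, show s ≤ min e.2 gpt from le_min h2 hs,
          show min e.2 gpt ≤ s + (gpt - s) from ?_, trivial⟩
        have hss : s + (gpt - s) = gpt := by ring
        rw [hss]; exact min_le_right _ _
      · refine ⟨show (0:ℝ) ≤ s + e.1 - gpt by linarith,
          show gpt ≤ max e.2 gpt from le_max_right _ _, ?_, ?_⟩
        · show max e.2 gpt ≤ gpt + (s + e.1 - gpt)
          have hss : gpt + (s + e.1 - gpt) = s + e.1 := by ring
          rw [hss]; exact max_le h3 (le_of_lt hc)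
        · show Valid (gpt + (s + e.1 - gpt)) r
          have hss : gpt + (s + e.1 - gpt) = s + e.1 := by ring
          rw [hss]; exact h4
      · intro x hx
        obtain rfl := List.mem_singleton.1 hx
        show gpt - s ≤ δ; linarith
      · intro x hx
        rcases List.mem_cons.1 hx with rfl | hx
        · show s + e.1 - gpt ≤ δ; linarith
        · exact hf x (by simp [hx])
      · -- sum estimate
        simp only [lsum_cons, lsum_nil]
        have key : (gpt - s) • g (min e.2 gpt) + (s + e.1 - gpt) • g (max e.2 gpt)
            - e.1 • g e.2 =
            (if e.2 ≤ gpt then (s + e.1 - gpt) • (g gpt - g e.2)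
             else (gpt - s) • (g gpt - g e.2)) := by
          by_cases hcase : e.2 ≤ gpt
          · rw [if_pos hcase, min_eq_left hcase, max_eq_right hcase]
            rw [smul_sub]
            module
          · push_neg at hcase
            rw [if_neg (not_le.2 hcase), min_eq_right hcase.le, max_eq_left hcase.le]
            rw [smul_sub]
            module
        calc ‖(gpt - s) • g (min e.2 gpt) + 0 + ((s + e.1 - gpt) • g (max e.2 gpt) + lsum g r)
              - (e.1 • g e.2 + lsum g r)‖
            = ‖(gpt - s) • g (min e.2 gpt) + (s + e.1 - gpt) • g (max e.2 gpt)
                - e.1 • g e.2‖ := by congr 1; abel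
          _ ≤ 2 * M * δ := by
              rw [key]
              by_cases hcase : e.2 ≤ gpt
              · rw [if_pos hcase, norm_smul, Real.norm_eq_abs,
                  abs_of_nonneg (by linarith : (0:ℝ) ≤ s + e.1 - gpt)]
                calc (s + e.1 - gpt) * ‖g gpt - g e.2‖ ≤ δ * (2 * M) := by
                      apply mul_le_mul (by linarith) (hb _ _) (norm_nonneg _) hδ
                  _ = 2 * M * δ := by ring
              · rw [if_neg hcase, norm_smul, Real.norm_eq_abs,
                  abs_of_nonneg (by linarith : (0:ℝ) ≤ gpt - s)]
                calc (gpt - s) * ‖g gpt - g e.2‖ ≤ δ * (2 * M) := by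
                      apply mul_le_mul (by linarith) (hb _ _) (norm_nonneg _) hδ
                  _ = 2 * M * δ := by ring


/-- Chop a list into `k+1` blocks of width `h` each. -/
noncomputable def chop (h : ℝ) : ℕ → ℝ → List Seg → List (List Seg)
  | 0, _, l => [l]
  | k + 1, s, l => (splitAt (s + h) s l).1 :: chop h k (s + h) (splitAt (s + h) s l).2

def Blocks (h : ℝ) : ℝ → List (List Seg) → Prop
  | _, [] => True
  | s, b :: bs => Valid s b ∧ psum b = h ∧ Blocks h (s + h) bs

def bsum (g : ℝ → X) (bs : List (List Seg)) : X := (bs.map (lsum g)).sum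

@[simp] lemma bsum_nil (g : ℝ → X) : bsum g [] = 0 := rfl
@[simp] lemma bsum_cons (g : ℝ → X) (b : List Seg) (bs : List (List Seg)) :
    bsum g (b :: bs) = lsum g b + bsum g bs := by simp [bsum]

lemma chop_spec {h M δ : ℝ} {g : ℝ → X} (hg : ∀ t, ‖g t‖ ≤ M) (hδ : 0 ≤ δ)
    (hh : 0 ≤ h) :
    ∀ (k : ℕ) (s : ℝ) (l : List Seg), Valid s l → Fine δ l → psum l = (k + 1) * h →
      Blocks h s (chop h k s l) ∧ (∀ b ∈ chop h k s l, Fine δ b) ∧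
      (chop h k s l).length = k + 1 ∧
      ‖bsum g (chop h k s l) - lsum g l‖ ≤ k * (2 * M * δ) := by
  intro k
  induction k with
  | zero =>
    intro s l hv hf hp
    refine ⟨⟨hv, by rw [hp]; ring, trivial⟩, ?_, by simp [chop], ?_⟩
    · intro b hb
      rcases List.mem_singleton.1 (by simpa [chop] using hb) with rfl
      exact hf
    · simp [chop]
  | succ k ih =>
    intro s l hv hf hp
    have hkh : (0:ℝ) ≤ (k + 1) * h := by positivity
    have hs1 : s ≤ s + h := by linarith
    have hs2 : s + h ≤ s + psum l := by
      rw [hp]; push_cast; nlinarith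
    obtain ⟨p1, p2, p3, p4, p5, p6, p7⟩ := splitAt_spec hg hδ l s hv hs1 hs2 hf
    have hpsnd : psum (splitAt (s + h) s l).2 = (k + 1) * h := by
      rw [p2, hp]; push_cast; ring
    obtain ⟨ib, ifine, ilen, isum⟩ := ih (s + h) (splitAt (s + h) s l).2 p4 p6 hpsnd
    have hps1 : psum (splitAt (s + h) s l).1 = h := by rw [p1]; ring
    refine ⟨⟨p3, hps1, ib⟩, ?_, by simp [chop, ilen], ?_⟩
    · intro b hb
      rcases List.mem_cons.1 (by simpa [chop] using hb) with rfl | hb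
      · exact p5
      · exact ifine b hb
    · show ‖bsum g (_ :: _) - lsum g l‖ ≤ _
      rw [bsum_cons]
      have tri : ‖lsum g (splitAt (s + h) s l).1 + bsum g (chop h k (s + h) (splitAt (s + h) s l).2)
          - lsum g l‖ ≤
          ‖lsum g (splitAt (s + h) s l).1 + lsum g (splitAt (s + h) s l).2 - lsum g l‖ +
          ‖bsum g (chop h k (s + h) (splitAt (s + h) s l).2) - lsum g (splitAt (s + h) s l).2‖ := by
        have : lsum g (splitAt (s + h) s l).1 + bsum g (chop h k (s + h) (splitAt (s + h) s l).2)
            - lsum g l =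
            (lsum g (splitAt (s + h) s l).1 + lsum g (splitAt (s + h) s l).2 - lsum g l) +
            (bsum g (chop h k (s + h) (splitAt (s + h) s l).2) - lsum g (splitAt (s + h) s l).2) := by
          abel
        rw [this]; exact norm_add_le _ _
      calc _ ≤ _ := tri
        _ ≤ 2 * M * δ + k * (2 * M * δ) := add_le_add p7 isum
        _ = (k + 1 : ℕ) * (2 * M * δ) := by push_cast; ring

def mix : List Bool → List (List Seg) → List (List Seg) → List Seg
  | c :: cs, p :: ps, q :: qs => (if c then p else q) ++ mix cs ps qs
  | _, _, _ => []

@[simp] lemma mix_nil : mix [] [] [] = [] := rfl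
lemma mix_cons (c : Bool) (cs : List Bool) (p q : List Seg) (ps qs : List (List Seg)) :
    mix (c :: cs) (p :: ps) (q :: qs) = (if c then p else q) ++ mix cs ps qs := rfl

lemma mix_spec {h δ : ℝ} :
    ∀ (cs : List Bool) (ps qs : List (List Seg)) (s : ℝ),
      cs.length = ps.length → ps.length = qs.length →
      Blocks h s ps → Blocks h s qs →
      (∀ b ∈ ps, Fine δ b) → (∀ b ∈ qs, Fine δ b) →
      Valid s (mix cs ps qs) ∧ psum (mix cs ps qs) = ps.length * h ∧
      Fine δ (mix cs ps qs) := by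
  intro cs
  induction cs with
  | nil =>
    intro ps qs s hl1 hl2 _ _ _ _
    have hps : ps = [] := List.length_eq_zero_iff.1 (hl1.symm ▸ rfl)
    subst hps
    have hqs : qs = [] := List.length_eq_zero_iff.1 (hl2.symm ▸ rfl)
    subst hqs
    refine ⟨trivial, by simp, by intro e he; simp [mix] at he⟩
  | cons c cs ih =>
    intro ps qs s hl1 hl2 hbp hbq hfp hfq
    cases ps with
    | nil => simp at hl1
    | cons p ps' =>
      cases qs with
      | nil => simp at hl2
      | cons q qs' =>
        obtain ⟨hvp, hpp, hbp'⟩ := hbp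
        obtain ⟨hvq, hpq, hbq'⟩ := hbq
        obtain ⟨iv, ip, ifi⟩ := ih ps' qs' (s + h) (by simpa using hl1) (by simpa using hl2)
          hbp' hbq' (fun b hb => hfp b (by simp [hb])) (fun b hb => hfq b (by simp [hb]))
        rw [mix_cons]
        have hhead : Valid s (if c then p else q) ∧ psum (if c then p else q) = h ∧
            Fine δ (if c then p else q) := by
          cases c
          · simp only [if_neg (by simp : ¬ (false : Bool) = true)]
            exact ⟨hvq, hpq, hfq q (by simp)⟩
          · simp only [if_pos rfl]
            exact ⟨hvp, hpp, hfp p (by simp)⟩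
        refine ⟨valid_append hhead.1 ?_, ?_, fine_append hhead.2.2 ifi⟩
        · rw [hhead.2.1]; exact iv
        · rw [psum_append, hhead.2.1, ip]
          simp; ring


section Classy

variable {m : ℕ}

noncomputable def nuv (kf : ℝ → Fin m) (l : List Seg) : EuclideanSpace ℝ (Fin m) :=
  (l.map (fun e => e.1 • EuclideanSpace.single (kf e.2) (1:ℝ))).sum

noncomputable def Tc (c : Fin m → X) (v : EuclideanSpace ℝ (Fin m)) : X :=
  ∑ p, v p • c p

@[simp] lemma nuv_nil (kf : ℝ → Fin m) : nuv kf ([] : List Seg) = 0 := rfl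
@[simp] lemma nuv_cons (kf : ℝ → Fin m) (e : Seg) (l : List Seg) :
    nuv kf (e :: l) = e.1 • EuclideanSpace.single (kf e.2) (1:ℝ) + nuv kf l := by
  simp [nuv]

@[simp] lemma Tc_zero (c : Fin m → X) : Tc c 0 = 0 := by simp [Tc]
lemma Tc_add (c : Fin m → X) (v w : EuclideanSpace ℝ (Fin m)) :
    Tc c (v + w) = Tc c v + Tc c w := by
  simp [Tc, add_smul, Finset.sum_add_distrib]
lemma Tc_smul (c : Fin m → X) (r : ℝ) (v : EuclideanSpace ℝ (Fin m)) :
    Tc c (r • v) = r • Tc c v := by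
  simp [Tc, Finset.smul_sum, smul_smul]
lemma Tc_sub (c : Fin m → X) (v w : EuclideanSpace ℝ (Fin m)) :
    Tc c (v - w) = Tc c v - Tc c w := by
  simp [Tc, sub_smul, Finset.sum_sub_distrib]
lemma Tc_single (c : Fin m → X) (r : ℝ) (p : Fin m) :
    Tc c (r • EuclideanSpace.single p (1:ℝ)) = r • c p := by
  rw [Tc_smul]
  congr 1
  rw [Tc]
  rw [Finset.sum_eq_single p]
  · simp [EuclideanSpace.single_apply]
  · intro q _ hq
    simp [EuclideanSpace.single_apply, hq]
  · simp

lemma norm_nuv_le (kf : ℝ → Fin m) {s : ℝ} {l : List Seg} (hv : Valid s l) :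
    ‖nuv kf l‖ ≤ psum l := by
  induction l generalizing s with
  | nil => simp
  | cons e r ih =>
    obtain ⟨h1, _, _, h4⟩ := hv
    calc ‖nuv kf (e :: r)‖ ≤ ‖e.1 • EuclideanSpace.single (kf e.2) (1:ℝ)‖ + ‖nuv kf r‖ := by
          rw [nuv_cons]; exact norm_add_le _ _
      _ ≤ e.1 + psum r := by
          refine add_le_add ?_ (ih h4)
          rw [norm_smul, EuclideanSpace.norm_single]
          simp [abs_of_nonneg h1]
      _ = psum (e :: r) := by simp

lemma lsum_approx {g : ℝ → X} {c : Fin m → X} {kf : ℝ → Fin m} {ε₁ : ℝ}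
    (hk : ∀ t, ‖g t - c (kf t)‖ ≤ ε₁) {s : ℝ} {l : List Seg} (hv : Valid s l) :
    ‖lsum g l - Tc c (nuv kf l)‖ ≤ ε₁ * psum l := by
  induction l generalizing s with
  | nil => simp
  | cons e r ih =>
    obtain ⟨h1, _, _, h4⟩ := hv
    have key : lsum g (e :: r) - Tc c (nuv kf (e :: r)) =
        (e.1 • g e.2 - e.1 • c (kf e.2)) + (lsum g r - Tc c (nuv kf r)) := by
      rw [lsum_cons, nuv_cons, Tc_add, Tc_single]
      abel
    rw [key]
    calc ‖_ + _‖ ≤ ‖e.1 • g e.2 - e.1 • c (kf e.2)‖ + ‖lsum g r - Tc c (nuv kf r)‖ :=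
          norm_add_le _ _
      _ ≤ e.1 * ε₁ + ε₁ * psum r := by
          refine add_le_add ?_ (ih h4)
          rw [← smul_sub, norm_smul]
          simp only [Real.norm_eq_abs, abs_of_nonneg h1]
          exact mul_le_mul_of_nonneg_left (hk e.2) h1
      _ = ε₁ * psum (e :: r) := by simp; ring

lemma norm_Tc_le {c : Fin m → X} {M : ℝ} (hc : ∀ p, ‖c p‖ ≤ M) (hM : 0 ≤ M)
    (v : EuclideanSpace ℝ (Fin m)) : ‖Tc c v‖ ≤ M * m * ‖v‖ := by
  have happ : ∀ p, |v p| ≤ ‖v‖ := by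
    intro p
    rw [EuclideanSpace.norm_eq]
    rw [← Real.sqrt_sq_eq_abs]
    apply Real.sqrt_le_sqrt
    calc v p ^ 2 = ‖v p‖ ^ 2 := by rw [Real.norm_eq_abs, sq_abs]
      _ ≤ ∑ i, ‖v i‖ ^ 2 := Finset.single_le_sum (f := fun i => ‖v i‖ ^ 2)
          (fun i _ => by positivity) (Finset.mem_univ p)
  calc ‖Tc c v‖ ≤ ∑ p, ‖v p • c p‖ := norm_sum_le _ _
    _ ≤ ∑ _p : Fin m, M * ‖v‖ := by
        refine Finset.sum_le_sum fun p _ => ?_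
        rw [norm_smul, Real.norm_eq_abs]
        calc |v p| * ‖c p‖ ≤ ‖v‖ * M := by
              apply mul_le_mul (happ p) (hc p) (norm_nonneg _) (norm_nonneg _)
          _ = M * ‖v‖ := by ring
    _ = M * m * ‖v‖ := by simp [Finset.sum_const]; ring

end Classy

section Greedy

variable {E : Type*} [NormedAddCommGroup E] [InnerProductSpace ℝ E]

noncomputable def wsum (lam : ℝ) : List Bool → List E → E
  | c :: cs, v :: vs => (if c then 1 - lam else -lam) • v + wsum lam cs vs
  | _, _ => 0

@[simp] lemma wsum_nil (lam : ℝ) : wsum lam [] ([] : List E) = 0 := rfl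
lemma wsum_cons (lam : ℝ) (c : Bool) (cs : List Bool) (v : E) (vs : List E) :
    wsum lam (c :: cs) (v :: vs) = (if c then 1 - lam else -lam) • v + wsum lam cs vs := rfl

lemma greedy {lam : ℝ} (h0 : 0 ≤ lam) (h1 : lam ≤ 1) :
    ∀ (vs : List E) (D : E), ∃ cs : List Bool, cs.length = vs.length ∧
      ‖D + wsum lam cs vs‖ ^ 2 ≤ ‖D‖ ^ 2 + (vs.map (fun v => ‖v‖ ^ 2)).sum := by
  intro vs
  induction vs with
  | nil =>
    intro D
    exact ⟨[], rfl, by simp⟩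
  | cons v vs ih =>
    intro D
    have hl2 : lam ^ 2 ≤ 1 := by nlinarith
    have hA : (0:ℝ) ≤ (1 - lam ^ 2) * ‖v‖ ^ 2 := mul_nonneg (by linarith) (sq_nonneg _)
    have hl3 : (1 - lam) ^ 2 ≤ 1 := by nlinarith
    have hB : (0:ℝ) ≤ (1 - (1 - lam) ^ 2) * ‖v‖ ^ 2 := mul_nonneg (by linarith) (sq_nonneg _)
    have key : ∃ c : Bool, (2 : ℝ) * ((if c then 1 - lam else -lam) * inner ℝ D v) +
        (if c then 1 - lam else -lam) ^ 2 * ‖v‖ ^ 2 ≤ ‖v‖ ^ 2 := by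
      rcases le_or_gt (0:ℝ) (inner ℝ D v) with hd | hd
      · refine ⟨false, ?_⟩
        rw [if_neg (by simp)]
        nlinarith [mul_nonneg h0 hd]
      · refine ⟨true, ?_⟩
        rw [if_pos rfl]
        nlinarith [mul_nonneg (by linarith : (0:ℝ) ≤ 1 - lam) (by linarith : (0:ℝ) ≤ -(inner ℝ D v : ℝ))]
    obtain ⟨c, hc⟩ := key
    set coef : ℝ := if c then 1 - lam else -lam with hcoef
    obtain ⟨cs, hlen, hcs⟩ := ih (D + coef • v)
    refine ⟨c :: cs, by simpa using hlen, ?_⟩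
    have hexp : ‖D + coef • v‖ ^ 2 = ‖D‖ ^ 2 + 2 * (coef * inner ℝ D v) + coef ^ 2 * ‖v‖ ^ 2 := by
      rw [@norm_add_sq_real, real_inner_smul_right, norm_smul, Real.norm_eq_abs, mul_pow, sq_abs]
      try ring
    rw [wsum_cons, ← add_assoc]
    calc ‖D + coef • v + wsum lam cs vs‖ ^ 2
        ≤ ‖D + coef • v‖ ^ 2 + (vs.map (fun v => ‖v‖ ^ 2)).sum := hcs
      _ ≤ ‖D‖ ^ 2 + ‖v‖ ^ 2 + (vs.map (fun v => ‖v‖ ^ 2)).sum := by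
          rw [hexp]; nlinarith [hc]
      _ = ‖D‖ ^ 2 + ((v :: vs).map (fun v => ‖v‖ ^ 2)).sum := by simp; ring

end Greedy


section MixEst

variable {m : ℕ}

lemma mixEst {g : ℝ → X} {c : Fin m → X} {kf : ℝ → Fin m} {lam ε₁ h : ℝ}
    (hk : ∀ t, ‖g t - c (kf t)‖ ≤ ε₁) (hlam0 : 0 ≤ lam) (hlam1 : lam ≤ 1)
    (hε₁ : 0 ≤ ε₁) (hh : 0 ≤ h) :
    ∀ (cs : List Bool) (ps qs : List (List Seg)) (s : ℝ),
      cs.length = ps.length → ps.length = qs.length →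
      Blocks h s ps → Blocks h s qs →
      ‖(lsum g (mix cs ps qs) - (lam • bsum g ps + (1 - lam) • bsum g qs)) -
        Tc c (wsum lam cs (List.zipWith (fun p q => nuv kf p - nuv kf q) ps qs))‖ ≤
        cs.length * (2 * ε₁ * h) := by
  intro cs
  induction cs with
  | nil =>
    intro ps qs s hl1 hl2 _ _
    have hps : ps = [] := List.length_eq_zero_iff.1 (hl1.symm ▸ rfl)
    subst hps
    have hqs : qs = [] := List.length_eq_zero_iff.1 (hl2.symm ▸ rfl)
    subst hqs
    simp
  | cons c0 cs ih =>
    intro ps qs s hl1 hl2 hbp hbq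
    cases ps with
    | nil => simp at hl1
    | cons p ps' =>
      cases qs with
      | nil => simp at hl2
      | cons q qs' =>
        obtain ⟨hvp, hpp, hbp'⟩ := hbp
        obtain ⟨hvq, hpq, hbq'⟩ := hbq
        have iv := ih ps' qs' (s + h) (by simpa using hl1) (by simpa using hl2) hbp' hbq'
        set coef : ℝ := if c0 then 1 - lam else -lam with hcoef
        have hid : (lsum g (mix (c0 :: cs) (p :: ps') (q :: qs')) -
            (lam • bsum g (p :: ps') + (1 - lam) • bsum g (q :: qs'))) -
            Tc c (wsum lam (c0 :: cs)
              (List.zipWith (fun p q => nuv kf p - nuv kf q) (p :: ps') (q :: qs'))) =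
            (coef • ((lsum g p - Tc c (nuv kf p)) - (lsum g q - Tc c (nuv kf q)))) +
            ((lsum g (mix cs ps' qs') - (lam • bsum g ps' + (1 - lam) • bsum g qs')) -
              Tc c (wsum lam cs (List.zipWith (fun p q => nuv kf p - nuv kf q) ps' qs'))) := by
          rw [mix_cons, lsum_append, bsum_cons, bsum_cons, List.zipWith_cons_cons,
            wsum_cons, Tc_add, Tc_smul, Tc_sub]
          cases c0
          · simp only [Bool.false_eq_true, if_false, ← hcoef]
            have : coef = -lam := by rw [hcoef]; simp
            rw [this]
            module
          · simp only [if_true, ← hcoef]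
            have : coef = 1 - lam := by rw [hcoef]; simp
            rw [this]
            module
        rw [hid]
        have hcoef1 : |coef| ≤ 1 := by
          rw [hcoef]
          cases c0 <;> simp <;> [skip; skip] <;> rw [abs_le] <;> constructor <;> linarith
        have hhead : ‖coef • ((lsum g p - Tc c (nuv kf p)) - (lsum g q - Tc c (nuv kf q)))‖ ≤
            2 * ε₁ * h := by
          rw [norm_smul, Real.norm_eq_abs]
          have h1 : ‖lsum g p - Tc c (nuv kf p)‖ ≤ ε₁ * h := by
            have := lsum_approx hk hvp
            rwa [hpp] at this
          have h2 : ‖lsum g q - Tc c (nuv kf q)‖ ≤ ε₁ * h := by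
            have := lsum_approx hk hvq
            rwa [hpq] at this
          calc |coef| * ‖_ - _‖ ≤ 1 * (‖lsum g p - Tc c (nuv kf p)‖ +
              ‖lsum g q - Tc c (nuv kf q)‖) := by
                refine mul_le_mul hcoef1 (norm_sub_le _ _) (norm_nonneg _) zero_le_one
            _ ≤ 1 * (ε₁ * h + ε₁ * h) := by
                refine mul_le_mul_of_nonneg_left (add_le_add h1 h2) zero_le_one
            _ = 2 * ε₁ * h := by ring
        calc ‖_ + _‖ ≤ _ + _ := norm_add_le _ _
          _ ≤ 2 * ε₁ * h + cs.length * (2 * ε₁ * h) := add_le_add hhead iv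
          _ = (c0 :: cs).length * (2 * ε₁ * h) := by
              simp [List.length_cons]; push_cast; ring

lemma usq_bound {h : ℝ} (kf : ℝ → Fin m) (hh : 0 ≤ h) :
    ∀ (ps qs : List (List Seg)) (s s' : ℝ), Blocks h s ps → Blocks h s' qs →
      ((List.zipWith (fun p q => nuv kf p - nuv kf q) ps qs).map (fun v => ‖v‖ ^ 2)).sum ≤
        ps.length * (2 * h) ^ 2 := by
  intro ps
  induction ps with
  | nil => intro qs s s' _ _; simp
  | cons p ps' ih =>
    intro qs s s' hbp hbq
    cases qs with
    | nil =>
      simp only [List.zipWith_nil_right, List.map_nil, List.sum_nil]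
      positivity
    | cons q qs' =>
      obtain ⟨hvp, hpp, hbp'⟩ := hbp
      obtain ⟨hvq, hpq, hbq'⟩ := hbq
      have hhead : ‖nuv kf p - nuv kf q‖ ^ 2 ≤ (2 * h) ^ 2 := by
        have hb : ‖nuv kf p - nuv kf q‖ ≤ 2 * h := by
          calc ‖nuv kf p - nuv kf q‖ ≤ ‖nuv kf p‖ + ‖nuv kf q‖ := norm_sub_le _ _
            _ ≤ psum p + psum q := add_le_add (norm_nuv_le kf hvp) (norm_nuv_le kf hvq)
            _ = 2 * h := by rw [hpp, hpq]; ring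
        exact pow_le_pow_left₀ (norm_nonneg _) hb 2
      have := ih qs' (s + h) (s' + h) hbp' hbq'
      simp only [List.zipWith_cons_cons, List.map_cons, List.sum_cons, List.length_cons]
      push_cast
      nlinarith [this]

end MixEst

lemma exists_centers {s : Set X} (hs : TotallyBounded s) {ε : ℝ} (hε : 0 < ε) :
    ∃ (m : ℕ) (c : Fin m → X), (∀ p, c p ∈ s) ∧ ∀ x ∈ s, ∃ p, ‖x - c p‖ ≤ ε := by
  obtain ⟨t, hts, htf, hcov⟩ := (totallyBounded_iff_subset.1 hs)
    {p : X × X | dist p.1 p.2 < ε} (Metric.dist_mem_uniformity hε)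
  classical
  refine ⟨htf.toFinset.toList.length, fun i => htf.toFinset.toList.get i, ?_, ?_⟩
  · intro p
    apply hts
    have hmem : htf.toFinset.toList.get p ∈ htf.toFinset.toList := List.get_mem _ _
    simpa only [Finset.mem_toList, Set.Finite.mem_toFinset] using hmem
  · intro x hx
    have := hcov hx
    simp only [Set.mem_iUnion] at this
    obtain ⟨y, hyt, hxy⟩ := this
    have hyL : y ∈ htf.toFinset.toList := by
      simpa only [Finset.mem_toList, Set.Finite.mem_toFinset] using hyt
    obtain ⟨i, hi⟩ := List.mem_iff_get.1 hyL
    refine ⟨i, ?_⟩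
    show ‖x - htf.toFinset.toList.get i‖ ≤ ε
    rw [hi, ← dist_eq_norm]
    exact le_of_lt hxy


set_option maxHeartbeats 2000000 in
lemma LL {g : ℝ → X} {M : ℝ} (hg : ∀ t, ‖g t‖ ≤ M) (hM : 1 ≤ M)
    (hcen : ∀ ε₁ : ℝ, 0 < ε₁ → ∃ (m : ℕ) (c : Fin m → X) (kf : ℝ → Fin m),
        (∀ p, ‖c p‖ ≤ M) ∧ ∀ t, ‖g t - c (kf t)‖ ≤ ε₁)
    {ε δ : ℝ} (hε : 0 < ε) (hδ : 0 < δ) :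
    ∃ δ' : ℝ, 0 < δ' ∧ δ' ≤ δ ∧ ∀ lam : ℝ, 0 ≤ lam → lam ≤ 1 →
      ∀ lP lQ : List Seg, Valid 0 lP → psum lP = 1 → Fine δ' lP →
        Valid 0 lQ → psum lQ = 1 → Fine δ' lQ →
        ∃ lR : List Seg, Valid 0 lR ∧ psum lR = 1 ∧ Fine δ' lR ∧
          ‖lsum g lR - (lam • lsum g lP + (1 - lam) • lsum g lQ)‖ ≤ ε := by
  have hM0 : (0:ℝ) < M := lt_of_lt_of_le one_pos hM
  obtain ⟨m, c, kf, hc, hk⟩ := hcen (ε / 8) (by positivity)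
  set N : ℕ := ⌈(256:ℝ) * M ^ 2 * ((m:ℝ) + 1) ^ 2 / ε ^ 2⌉₊ + 1 with hNdef
  have hN0 : (0:ℝ) < N := by positivity
  have hNbig : 256 * M ^ 2 * ((m:ℝ) + 1) ^ 2 / ε ^ 2 < N := by
    calc (256:ℝ) * M ^ 2 * ((m:ℝ) + 1) ^ 2 / ε ^ 2
        ≤ (⌈(256:ℝ) * M ^ 2 * ((m:ℝ) + 1) ^ 2 / ε ^ 2⌉₊ : ℝ) := Nat.le_ceil _
      _ < N := by rw [hNdef]; push_cast; linarith
  set h : ℝ := 1 / N with hhdef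
  have hh0 : (0:ℝ) < h := by positivity
  set δ' : ℝ := min δ (ε / (16 * M * N)) with hδ'def
  have hδ'0 : 0 < δ' := lt_min hδ (by positivity)
  refine ⟨δ', hδ'0, min_le_left _ _, ?_⟩
  intro lam hlam0 hlam1 lP lQ hvP hpP hfP hvQ hpQ hfQ
  have hpsum : ∀ l : List Seg, psum l = 1 → psum l = ((N - 1 : ℕ) + 1) * h := by
    intro l hl
    rw [hl]
    have : ((N - 1 : ℕ) : ℝ) + 1 = (N : ℝ) := by
      have : 1 ≤ N := Nat.le_add_left 1 _
      push_cast [Nat.cast_sub this]; ring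
    push_cast
    rw [this, hhdef]
    field_simp
  obtain ⟨hBP, hFP, hLP, hSP⟩ := chop_spec hg hδ'0.le hh0.le (N - 1) 0 lP hvP hfP (hpsum lP hpP)
  obtain ⟨hBQ, hFQ, hLQ, hSQ⟩ := chop_spec hg hδ'0.le hh0.le (N - 1) 0 lQ hvQ hfQ (hpsum lQ hpQ)
  set PB := chop h (N - 1) 0 lP with hPBdef
  set QB := chop h (N - 1) 0 lQ with hQBdef
  have hNN : N - 1 + 1 = N := Nat.succ_pred_eq_of_pos (Nat.lt_of_lt_of_le Nat.zero_lt_one (Nat.le_add_left 1 _))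
  set u := List.zipWith (fun p q => nuv kf p - nuv kf q) PB QB with hudef
  obtain ⟨cs, hcslen, hwsum⟩ := greedy hlam0 hlam1 u 0
  have hulen : u.length = N := by
    rw [hudef, List.length_zipWith, hLP, hLQ, hNN, min_self]
  -- the mixed partition
  set lR := mix cs PB QB with hlRdef
  have hcsl : cs.length = PB.length := by rw [hcslen, hulen, hLP, hNN]
  have hpql : PB.length = QB.length := by rw [hLP, hLQ]
  obtain ⟨hvR, hpR, hfR⟩ := mix_spec cs PB QB 0 hcsl hpql hBP hBQ hFP hFQ
  have hpR1 : psum lR = 1 := by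
    rw [hpR, hLP, hNN, hhdef]
    field_simp
  -- greedy bound
  set D := wsum lam cs u with hDdef
  have hD2 : ‖D‖ ^ 2 ≤ 4 / N := by
    have hsq := usq_bound kf hh0.le PB QB 0 0 hBP hBQ
    have : ((PB.length : ℝ)) * (2 * h) ^ 2 = 4 / N := by
      rw [hLP, hNN, hhdef]
      field_simp
      ring
    rw [this] at hsq
    calc ‖D‖ ^ 2 = ‖(0:EuclideanSpace ℝ (Fin m)) + D‖ ^ 2 := by rw [zero_add]
      _ ≤ ‖(0:EuclideanSpace ℝ (Fin m))‖ ^ 2 + (u.map (fun v => ‖v‖ ^ 2)).sum := hwsum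
      _ ≤ 0 + (PB.length : ℝ) * (2 * h) ^ 2 := by
          rw [norm_zero]
          exact add_le_add (by norm_num) (le_of_le_of_eq hsq this.symm)
      _ ≤ 4 / N := by rw [this]; linarith
  -- ‖Tc c D‖ ≤ ε/8
  have hTcD : ‖Tc c D‖ ≤ ε / 8 := by
    have hTc := norm_Tc_le hc hM0.le D
    have hDnn : (0:ℝ) ≤ ‖D‖ := norm_nonneg _
    have hstep : (M * m * ‖D‖) ^ 2 ≤ (ε / 8) ^ 2 := by
      have e1 : (M * m * ‖D‖) ^ 2 = M ^ 2 * (m:ℝ) ^ 2 * ‖D‖ ^ 2 := by ring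
      have e2 : M ^ 2 * (m:ℝ) ^ 2 * ‖D‖ ^ 2 ≤ M ^ 2 * (m:ℝ) ^ 2 * (4 / N) :=
        mul_le_mul_of_nonneg_left hD2 (by positivity)
      have e3 : M ^ 2 * (m:ℝ) ^ 2 * (4 / N) ≤ (ε / 8) ^ 2 := by
        have hcross : 256 * M ^ 2 * ((m:ℝ) + 1) ^ 2 < (N:ℝ) * ε ^ 2 := by
          have := (div_lt_iff₀ (by positivity : (0:ℝ) < ε ^ 2)).1 hNbig
          linarith
        have hmm : M ^ 2 * (m:ℝ) ^ 2 * 256 ≤ 256 * M ^ 2 * ((m:ℝ) + 1) ^ 2 := by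
          have hm0 : (0:ℝ) ≤ (m:ℝ) := Nat.cast_nonneg m
          have hm1 : (m:ℝ) ^ 2 ≤ ((m:ℝ) + 1) ^ 2 := by nlinarith
          nlinarith [sq_nonneg M]
        calc M ^ 2 * (m:ℝ) ^ 2 * (4 / N) = (M ^ 2 * (m:ℝ) ^ 2 * 4) / N := by ring
          _ ≤ (ε / 8) ^ 2 := by
            rw [div_le_iff₀ hN0]
            have heq : (ε / 8) ^ 2 * N = (N:ℝ) * ε ^ 2 / 64 := by ring
            rw [heq]
            nlinarith [hcross, hmm]
      calc (M * m * ‖D‖) ^ 2 = M ^ 2 * (m:ℝ) ^ 2 * ‖D‖ ^ 2 := e1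
        _ ≤ M ^ 2 * (m:ℝ) ^ 2 * (4 / N) := e2
        _ ≤ (ε / 8) ^ 2 := e3
    have hfin : M * m * ‖D‖ ≤ ε / 8 := by
      nlinarith [hstep, mul_nonneg (mul_nonneg hM0.le (Nat.cast_nonneg m : (0:ℝ) ≤ m)) hDnn, hε]
    exact le_trans hTc hfin
  -- mixEst
  have hmixEst := mixEst hk hlam0 hlam1 (by positivity : (0:ℝ) ≤ ε / 8) hh0.le
    cs PB QB 0 hcsl hpql hBP hBQ
  have hmixbound : ‖(lsum g lR - (lam • bsum g PB + (1 - lam) • bsum g QB)) - Tc c D‖ ≤ ε / 4 := by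
    refine le_trans hmixEst ?_
    have : (cs.length : ℝ) * (2 * (ε / 8) * h) = ε / 4 := by
      rw [hcslen, hulen, hhdef]
      field_simp
      ring
    rw [this]
  -- chop errors
  have hchopP : ‖bsum g PB - lsum g lP‖ ≤ ε / 8 := by
    refine le_trans hSP ?_
    have hδ'2 : δ' ≤ ε / (16 * M * N) := min_le_right _ _
    calc ((N - 1 : ℕ) : ℝ) * (2 * M * δ') ≤ (N : ℝ) * (2 * M * (ε / (16 * M * N))) := by
          refine mul_le_mul ?_ ?_ (by positivity) (by positivity)
          · exact_mod_cast Nat.cast_le.2 (Nat.sub_le N 1)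
          · exact mul_le_mul_of_nonneg_left hδ'2 (by positivity)
      _ = ε / 8 := by field_simp; ring
  have hchopQ : ‖bsum g QB - lsum g lQ‖ ≤ ε / 8 := by
    refine le_trans hSQ ?_
    have hδ'2 : δ' ≤ ε / (16 * M * N) := min_le_right _ _
    calc ((N - 1 : ℕ) : ℝ) * (2 * M * δ') ≤ (N : ℝ) * (2 * M * (ε / (16 * M * N))) := by
          refine mul_le_mul ?_ ?_ (by positivity) (by positivity)
          · exact_mod_cast Nat.cast_le.2 (Nat.sub_le N 1)
          · exact mul_le_mul_of_nonneg_left hδ'2 (by positivity)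
      _ = ε / 8 := by field_simp; ring
  -- final assembly
  refine ⟨lR, hvR, hpR1, hfR, ?_⟩
  have hsplit : lsum g lR - (lam • lsum g lP + (1 - lam) • lsum g lQ) =
      ((lsum g lR - (lam • bsum g PB + (1 - lam) • bsum g QB)) - Tc c D) + Tc c D +
      lam • (bsum g PB - lsum g lP) + (1 - lam) • (bsum g QB - lsum g lQ) := by
    module
  rw [hsplit]
  have hb1 : ‖lam • (bsum g PB - lsum g lP)‖ ≤ ε / 8 := by
    rw [norm_smul, Real.norm_eq_abs, abs_of_nonneg hlam0]
    calc lam * ‖bsum g PB - lsum g lP‖ ≤ 1 * (ε / 8) :=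
          mul_le_mul hlam1 hchopP (norm_nonneg _) zero_le_one
      _ = ε / 8 := by ring
  have hb2 : ‖(1 - lam) • (bsum g QB - lsum g lQ)‖ ≤ ε / 8 := by
    rw [norm_smul, Real.norm_eq_abs, abs_of_nonneg (by linarith)]
    calc (1 - lam) * ‖bsum g QB - lsum g lQ‖ ≤ 1 * (ε / 8) :=
          mul_le_mul (by linarith) hchopQ (norm_nonneg _) zero_le_one
      _ = ε / 8 := by ring
  calc ‖_ + _ + _ + _‖ ≤ ‖_ + _ + _‖ + ‖(1 - lam) • (bsum g QB - lsum g lQ)‖ := norm_add_le _ _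
    _ ≤ (‖_ + _‖ + ‖lam • (bsum g PB - lsum g lP)‖) + _ := by
        refine add_le_add_left (norm_add_le _ _) _
    _ ≤ ((‖(lsum g lR - (lam • bsum g PB + (1 - lam) • bsum g QB)) - Tc c D‖ + ‖Tc c D‖) +
        ‖lam • (bsum g PB - lsum g lP)‖) + ‖(1 - lam) • (bsum g QB - lsum g lQ)‖ := by
        refine add_le_add_left (add_le_add_left (norm_add_le _ _) _) _
    _ ≤ ((ε / 4 + ε / 8) + ε / 8) + ε / 8 := by
        refine add_le_add (add_le_add (add_le_add hmixbound hTcD) hb1) hb2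
    _ ≤ ε := by linarith


/-! ### Converting between lists and tagged partitions -/

lemma psum_take_succ : ∀ (l : List Seg) (i : ℕ) (hi : i < l.length),
    psum (l.take (i + 1)) = psum (l.take i) + (l.get ⟨i, hi⟩).1 := by
  intro l
  induction l with
  | nil => intro i hi; simp at hi
  | cons e r ih =>
    intro i hi
    cases i with
    | zero => simp
    | succ j =>
      have hj : j < r.length := by simpa using hi
      have := ih j hj
      simp only [List.take_succ_cons, psum_cons, List.get_cons_succ]
      rw [this]; ring

lemma psum_take_mono {l : List Seg} (h : ∀ e ∈ l, 0 ≤ e.1) :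
    Monotone fun i : ℕ => psum (l.take i) := by
  apply monotone_nat_of_le_succ
  intro i
  by_cases hi : i < l.length
  · rw [psum_take_succ l i hi]
    have := h _ (List.get_mem l ⟨i, hi⟩)
    linarith
  · push_neg at hi
    rw [List.take_of_length_le hi, List.take_of_length_le (le_trans hi (Nat.le_succ i))]

lemma valid_get {l : List Seg} : ∀ {s : ℝ}, Valid s l → ∀ (i : ℕ) (hi : i < l.length),
    s + psum (l.take i) ≤ (l.get ⟨i, hi⟩).2 ∧ (l.get ⟨i, hi⟩).2 ≤ s + psum (l.take (i + 1)) := by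
  induction l with
  | nil => intro s _ i hi; simp at hi
  | cons e r ih =>
    intro s hv i hi
    obtain ⟨h1, h2, h3, h4⟩ := hv
    cases i with
    | zero => constructor <;> simp <;> linarith
    | succ j =>
      have hj : j < r.length := by simpa using hi
      have := ih h4 j hj
      simp only [List.take_succ_cons, psum_cons, List.get_cons_succ]
      constructor <;> [linarith [this.1]; linarith [this.2]]

lemma lsum_eq_sum_fin (F : ℝ → X) (l : List Seg) :
    lsum F l = ∑ i : Fin l.length, (l.get i).1 • F ((l.get i).2) := by
  calc lsum F l = lsum F (List.ofFn l.get) := by rw [List.ofFn_get]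
    _ = ∑ i : Fin l.length, (l.get i).1 • F ((l.get i).2) := by
        rw [lsum, List.map_ofFn, List.sum_ofFn]
        rfl

noncomputable def toPartition (l : List Seg) (hv : Valid 0 l) (hp : psum l = 1) :
    TaggedPartition where
  n := l.length
  pt := fun i => psum (l.take i.val)
  tag := fun i => (l.get i).2
  pt_zero := by simp
  pt_last := by
    show psum (l.take l.length) = 1
    rw [List.take_length]; exact hp
  pt_mono := fun a b hab => psum_take_mono hv.len_nonneg hab
  tag_mem := by
    intro i
    have := valid_get hv i.val i.isLt
    rw [zero_add, zero_add] at this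
    exact ⟨this.1, this.2⟩

lemma toPartition_mesh {l : List Seg} (hv : Valid 0 l) (hp : psum l = 1) {δ : ℝ}
    (hf : Fine δ l) : (toPartition l hv hp).mesh ≤ δ := by
  have hne : l ≠ [] := by
    intro h; rw [h] at hp; simp at hp
  have : Nonempty (Fin (toPartition l hv hp).n) := ⟨⟨0, List.length_pos_iff.2 hne⟩⟩
  apply ciSup_le
  intro i
  show psum (l.take (i.val + 1)) - psum (l.take i.val) ≤ δ
  rw [psum_take_succ l i.val i.isLt]
  have := hf _ (List.get_mem l ⟨i.val, i.isLt⟩)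
  linarith

lemma toPartition_rsum (F : ℝ → X) {l : List Seg} (hv : Valid 0 l) (hp : psum l = 1) :
    rsum F (toPartition l hv hp) = lsum F l := by
  rw [lsum_eq_sum_fin]
  apply Finset.sum_congr rfl
  intro i _
  have h1 : psum (l.take (i.val + 1)) = psum (l.take i.val) + (l.get i).1 := by
    rw [psum_take_succ l i.val i.isLt]; rfl
  show (psum (l.take (i.val + 1)) - psum (l.take i.val)) • F ((l.get ⟨i.val, i.isLt⟩).2) = _
  rw [h1]
  congr 1
  ring

/-- Turn a tagged partition (presented by `pt` and `tag` functions) into a list. -/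
def ofPt : (n : ℕ) → (Fin (n + 1) → ℝ) → (Fin n → ℝ) → List Seg
  | 0, _, _ => []
  | n + 1, pt, tag =>
    (pt 1 - pt 0, tag 0) :: ofPt n (fun i => pt i.succ) (fun i => tag i.succ)

lemma ofPt_psum : ∀ (n : ℕ) (pt : Fin (n + 1) → ℝ) (tag : Fin n → ℝ),
    psum (ofPt n pt tag) = pt (Fin.last n) - pt 0 := by
  intro n
  induction n with
  | zero =>
    intro pt tag
    show psum [] = pt (Fin.last 0) - pt 0
    have : (Fin.last 0 : Fin 1) = 0 := rfl
    rw [this]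
    simp
  | succ n ih =>
    intro pt tag
    rw [ofPt, psum_cons, ih]
    rw [show ((Fin.last n).succ : Fin (n + 2)) = Fin.last (n + 1) from Fin.succ_last n]
    rw [show ((0 : Fin (n + 1)).succ : Fin (n + 2)) = 1 from Fin.succ_zero_eq_one]
    ring

lemma ofPt_valid : ∀ (n : ℕ) (pt : Fin (n + 1) → ℝ) (tag : Fin n → ℝ),
    Monotone pt → (∀ i : Fin n, tag i ∈ Set.Icc (pt i.castSucc) (pt i.succ)) →
    Valid (pt 0) (ofPt n pt tag) := by
  intro n
  induction n with
  | zero => intro pt tag _ _; exact trivial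
  | succ n ih =>
    intro pt tag hm ht
    have h01 : pt 0 ≤ pt 1 := hm (Fin.zero_le 1)
    have ht0 := ht 0
    rw [Fin.castSucc_zero, Fin.succ_zero_eq_one] at ht0
    refine ⟨show (0:ℝ) ≤ pt 1 - pt 0 by linarith, ht0.1,
      show tag 0 ≤ pt 0 + (pt 1 - pt 0) by linarith [ht0.2], ?_⟩
    have heq : pt 0 + (pt 1 - pt 0) = pt 1 := by ring
    rw [heq]
    have := ih (fun i => pt i.succ) (fun i => tag i.succ)
      (fun a b hab => hm (Fin.succ_le_succ_iff.2 hab))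
      (by
        intro i
        have := ht i.succ
        rwa [← Fin.succ_castSucc] at this)
    simpa using this

lemma ofPt_lsum (F : ℝ → X) : ∀ (n : ℕ) (pt : Fin (n + 1) → ℝ) (tag : Fin n → ℝ),
    lsum F (ofPt n pt tag) = ∑ i : Fin n, (pt i.succ - pt i.castSucc) • F (tag i) := by
  intro n
  induction n with
  | zero => intro pt tag; simp [ofPt]
  | succ n ih =>
    intro pt tag
    rw [ofPt, lsum_cons, ih, Fin.sum_univ_succ]
    simp only [Fin.castSucc_zero, Fin.succ_zero_eq_one, Fin.succ_castSucc]

lemma ofPt_fine {δ : ℝ} : ∀ (n : ℕ) (pt : Fin (n + 1) → ℝ) (tag : Fin n → ℝ),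
    (∀ i : Fin n, pt i.succ - pt i.castSucc ≤ δ) → Fine δ (ofPt n pt tag) := by
  intro n
  induction n with
  | zero => intro pt tag _ e he; simp [ofPt] at he
  | succ n ih =>
    intro pt tag h e he
    rw [ofPt] at he
    rcases List.mem_cons.1 he with rfl | he
    · have := h 0
      rwa [Fin.castSucc_zero, Fin.succ_zero_eq_one] at this
    · refine ih _ _ ?_ e he
      intro i
      have := h i.succ
      rwa [← Fin.succ_castSucc] at this


/-! ### Tagged partition facts -/

lemma npos (P : TaggedPartition) : 0 < P.n := by
  by_contra hn
  push_neg at hn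
  have h0 : P.n = 0 := Nat.le_zero.1 hn
  have hlast : (Fin.last P.n : Fin (P.n + 1)) = 0 := by
    apply Fin.ext
    simp [h0]
  have hcontr := P.pt_last
  rw [hlast, P.pt_zero] at hcontr
  norm_num at hcontr

lemma len_le_mesh (P : TaggedPartition) (i : Fin P.n) :
    P.pt i.succ - P.pt i.castSucc ≤ P.mesh := by
  rw [TaggedPartition.mesh]
  exact le_ciSup (f := fun i : Fin P.n => P.pt i.succ - P.pt i.castSucc)
    (Set.Finite.bddAbove (Set.finite_range _)) i

lemma mesh_nonneg (P : TaggedPartition) : 0 ≤ P.mesh := by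
  have i0 : Fin P.n := ⟨0, npos P⟩
  refine le_trans ?_ (len_le_mesh P i0)
  have := P.pt_mono (Fin.castSucc_lt_succ (i := i0)).le
  linarith

def plist (P : TaggedPartition) : List Seg := ofPt P.n P.pt P.tag

lemma plist_valid (P : TaggedPartition) : Valid 0 (plist P) := by
  have := ofPt_valid P.n P.pt P.tag P.pt_mono P.tag_mem
  rwa [P.pt_zero] at this

lemma plist_psum (P : TaggedPartition) : psum (plist P) = 1 := by
  rw [plist, ofPt_psum, P.pt_last, P.pt_zero]
  ring

lemma plist_lsum (F : ℝ → X) (P : TaggedPartition) : lsum F (plist P) = rsum F P := by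
  rw [plist, ofPt_lsum]
  rfl

lemma plist_fine (P : TaggedPartition) {δ : ℝ} (h : P.mesh ≤ δ) : Fine δ (plist P) :=
  ofPt_fine _ _ _ (fun i => le_trans (len_le_mesh P i) h)

lemma tag_mem01 (P : TaggedPartition) (i : Fin P.n) : P.tag i ∈ Set.Icc (0:ℝ) 1 := by
  constructor
  · refine le_trans ?_ (P.tag_mem i).1
    rw [← P.pt_zero]
    exact P.pt_mono (Fin.zero_le _)
  · refine le_trans (P.tag_mem i).2 ?_
    rw [← P.pt_last]
    exact P.pt_mono (Fin.le_last _)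

noncomputable def rclamp (t : ℝ) : ℝ := max 0 (min 1 t)

lemma rclamp_mem (t : ℝ) : rclamp t ∈ Set.Icc (0:ℝ) 1 :=
  ⟨le_max_left _ _, max_le zero_le_one (min_le_left _ _)⟩

lemma rclamp_eq {t : ℝ} (h : t ∈ Set.Icc (0:ℝ) 1) : rclamp t = t := by
  rw [rclamp, min_eq_right h.2, max_eq_right h.1]

lemma rsum_clamp (f : ℝ → X) (P : TaggedPartition) :
    rsum (fun t => f (rclamp t)) P = rsum f P := by
  apply Finset.sum_congr rfl
  intro i _
  simp only [rclamp_eq (tag_mem01 P i)]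

lemma mem_limitPoints_iff (F : ℝ → X) (x : X) :
    x ∈ limitPoints F ↔
      ∀ δ > (0:ℝ), ∀ ε > (0:ℝ), ∃ T : TaggedPartition, T.mesh ≤ δ ∧ ‖rsum F T - x‖ ≤ ε := by
  constructor
  · rintro ⟨P, hm, hs⟩ δ hδ ε hε
    obtain ⟨N1, hN1⟩ := Metric.tendsto_atTop.1 hm δ hδ
    obtain ⟨N2, hN2⟩ := Metric.tendsto_atTop.1 hs ε hε
    refine ⟨P (max N1 N2), ?_, ?_⟩
    · have := hN1 (max N1 N2) (le_max_left _ _)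
      rw [Real.dist_eq, sub_zero] at this
      exact le_of_lt (lt_of_le_of_lt (le_abs_self _) this)
    · have := hN2 (max N1 N2) (le_max_right _ _)
      rw [dist_eq_norm] at this
      exact le_of_lt this
  · intro hx
    have hch : ∀ k : ℕ, ∃ T : TaggedPartition,
        T.mesh ≤ 1 / (k + 1) ∧ ‖rsum F T - x‖ ≤ 1 / (k + 1) := by
      intro k
      obtain ⟨T, h1, h2⟩ := hx (1 / (k + 1)) (by positivity) (1 / (k + 1)) (by positivity)
      exact ⟨T, h1, h2⟩
    choose T h1 h2 using hch
    refine ⟨T, ?_, ?_⟩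
    · exact squeeze_zero (fun k => mesh_nonneg (T k)) h1 tendsto_one_div_add_atTop_nhds_zero_nat
    · rw [tendsto_iff_norm_sub_tendsto_zero]
      exact squeeze_zero (fun k => norm_nonneg _) h2 tendsto_one_div_add_atTop_nhds_zero_nat

end RiemannAux

open RiemannAux

/-- If `f : [0,1] → X` has totally bounded image in a Banach space `X`,
then `I(f)` is convex. -/
theorem convex_limitPoints_of_totallyBounded_image
    {X : Type*} [NormedAddCommGroup X] [NormedSpace ℝ X] [CompleteSpace X]
    (f : ℝ → X) (htb : TotallyBounded (f '' Set.Icc (0 : ℝ) 1)) :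
    Convex ℝ (limitPoints f) := by
  classical
  intro x hx y hy a b ha hb hab
  obtain ⟨C, hC⟩ := (isBounded_iff_forall_norm_le).1 htb.isBounded
  set M : ℝ := max C 1 with hMdef
  set g : ℝ → X := fun t => f (rclamp t) with hgdef
  have hginim : ∀ t, g t ∈ f '' Set.Icc (0:ℝ) 1 := fun t => ⟨rclamp t, rclamp_mem t, rfl⟩
  have hg : ∀ t, ‖g t‖ ≤ M := fun t => le_trans (hC _ (hginim t)) (le_max_left _ _)
  have hM : 1 ≤ M := le_max_right _ _
  have hcen : ∀ ε₁ : ℝ, 0 < ε₁ → ∃ (m : ℕ) (c : Fin m → X) (kf : ℝ → Fin m),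
      (∀ p, ‖c p‖ ≤ M) ∧ ∀ t, ‖g t - c (kf t)‖ ≤ ε₁ := by
    intro ε₁ hε₁
    obtain ⟨m, c, hcs, hcov⟩ := exists_centers htb hε₁
    have hkf : ∀ t : ℝ, ∃ p, ‖g t - c p‖ ≤ ε₁ := fun t => hcov _ (hginim t)
    exact ⟨m, c, fun t => (hkf t).choose,
      fun p => le_trans (hC _ (hcs p)) (le_max_left _ _),
      fun t => (hkf t).choose_spec⟩
  rw [mem_limitPoints_iff]
  intro δ hδ ε hε
  obtain ⟨δ', hδ'0, hδ'le, hLL⟩ := LL hg hM hcen (show (0:ℝ) < ε / 2 by positivity) hδ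
  obtain ⟨TP, hTPm, hTPs⟩ := (mem_limitPoints_iff f x).1 hx δ' hδ'0 (ε / 4) (by positivity)
  obtain ⟨TQ, hTQm, hTQs⟩ := (mem_limitPoints_iff f y).1 hy δ' hδ'0 (ε / 4) (by positivity)
  have ha1 : a ≤ 1 := by linarith
  obtain ⟨lR, hvR, hpR, hfR, hRs⟩ := hLL a ha ha1 (plist TP) (plist TQ)
    (plist_valid TP) (plist_psum TP) (plist_fine TP hTPm)
    (plist_valid TQ) (plist_psum TQ) (plist_fine TQ hTQm)
  refine ⟨toPartition lR hvR hpR, le_trans (toPartition_mesh hvR hpR hfR) hδ'le, ?_⟩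
  have hgf : rsum f (toPartition lR hvR hpR) = lsum g lR := by
    rw [← rsum_clamp f (toPartition lR hvR hpR), ← hgdef, toPartition_rsum]
  have hP : lsum g (plist TP) = rsum f TP := by
    rw [plist_lsum g TP, hgdef, rsum_clamp]
  have hQ : lsum g (plist TQ) = rsum f TQ := by
    rw [plist_lsum g TQ, hgdef, rsum_clamp]
  rw [hP, hQ] at hRs
  have h1mb : (1 : ℝ) - a = b := by linarith
  rw [h1mb] at hRs
  have hid : lsum g lR - (a • x + b • y) =
      (lsum g lR - (a • rsum f TP + b • rsum f TQ)) +
      (a • (rsum f TP - x) + b • (rsum f TQ - y)) := by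
    module
  rw [hgf, hid]
  have hbnd1 : ‖a • (rsum f TP - x)‖ ≤ a * (ε / 4) := by
    rw [norm_smul, Real.norm_eq_abs, abs_of_nonneg ha]
    exact mul_le_mul_of_nonneg_left hTPs ha
  have hbnd2 : ‖b • (rsum f TQ - y)‖ ≤ b * (ε / 4) := by
    rw [norm_smul, Real.norm_eq_abs, abs_of_nonneg hb]
    exact mul_le_mul_of_nonneg_left hTQs hb
  calc ‖_ + _‖ ≤ ‖lsum g lR - (a • rsum f TP + b • rsum f TQ)‖ +
        ‖a • (rsum f TP - x) + b • (rsum f TQ - y)‖ := norm_add_le _ _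
    _ ≤ ε / 2 + (‖a • (rsum f TP - x)‖ + ‖b • (rsum f TQ - y)‖) :=
        add_le_add hRs (norm_add_le _ _)
    _ ≤ ε / 2 + (a * (ε / 4) + b * (ε / 4)) := by
        refine add_le_add_right (add_le_add hbnd1 hbnd2) _
    _ ≤ ε := by nlinarith
end

section
/- Let X be a real Banach space, let φ map each nonempty bounded subset A ⊂ X to the bounded real-valued function φ(A) on the closed unit ball B_{X*} of the dual X* given by φ(A)(x*) = sup_{a ∈ A} x*(a), an element of ℓ∞(B_{X*}). Let F : [0,1] → 2^X \ {∅} be a bounded multifunction with F(t) convex for all t. Then for every nonempty closed bounded set L ⊂ X and every sequence of tagged partitions (Γ_k, T_k): if S(F, Γ_k, T_k) → L in Hausdorff distance, then S(φ∘F, Γ_k, T_k) → φ(L) in the sup norm of ℓ∞(B_{X*}). -/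
open Pointwise Filter Metric Set

/-- The Radstrom-type embedding: a bounded set `A ⊆ X` is sent to the bounded function
`x* ↦ sup_{a ∈ A} x*(a)` on the closed unit ball of the dual space, an element of
`ℓ∞(B_{X*})`. -/
noncomputable def phiFun {X : Type*} [NormedAddCommGroup X] [NormedSpace ℝ X]
    (A : Set X) : ↥(Metric.closedBall (0 : X →L[ℝ] ℝ) 1) → ℝ :=
  fun g => sSup ((fun a => (g : X →L[ℝ] ℝ) a) '' A)

/-- Riemann integral sum of the function `φ ∘ F : [0,1] → ℓ∞(B_{X*})`. -/
noncomputable def psum {X : Type*} [NormedAddCommGroup X] [NormedSpace ℝ X]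
    (F : ℝ → Set X) (P : TaggedPartition) :
    ↥(Metric.closedBall (0 : X →L[ℝ] ℝ) 1) → ℝ :=
  ∑ i : Fin P.n, (P.pt i.succ - P.pt i.castSucc) • phiFun (F (P.tag i))


section AuxPhi
open Bornology
variable {X : Type*} [NormedAddCommGroup X] [NormedSpace ℝ X]

lemma isBounded_finsetSum {ι : Type*} (s : Finset ι) (A : ι → Set X)
    (hb : ∀ i ∈ s, IsBounded (A i)) : IsBounded (∑ i ∈ s, A i) := by
  classical
  induction s using Finset.cons_induction with
  | empty => rw [Finset.sum_empty, ← Set.singleton_zero]; exact Bornology.isBounded_singleton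
  | cons i s hi ih =>
    rw [Finset.sum_cons]
    exact (hb i (Finset.mem_cons_self i s)).add
      (ih fun j hj => hb j (Finset.mem_cons_of_mem hj))

lemma nonempty_finsetSum {ι : Type*} (s : Finset ι) (A : ι → Set X)
    (hne : ∀ i ∈ s, (A i).Nonempty) : (∑ i ∈ s, A i).Nonempty := by
  classical
  induction s using Finset.cons_induction with
  | empty => rw [Finset.sum_empty, ← Set.singleton_zero]; exact ⟨0, rfl⟩
  | cons i s hi ih =>
    rw [Finset.sum_cons]
    exact (hne i (Finset.mem_cons_self i s)).add
      (ih fun j hj => hne j (Finset.mem_cons_of_mem hj))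

lemma bddAbove_image' (f : X →L[ℝ] ℝ) {A : Set X} (hA : IsBounded A) :
    BddAbove ((fun a => f a) '' A) :=
  (f.lipschitz.isBounded_image hA).bddAbove

lemma sSup_image_finsetSum (f : X →L[ℝ] ℝ) {ι : Type*} (s : Finset ι) (A : ι → Set X)
    (hne : ∀ i ∈ s, (A i).Nonempty) (hb : ∀ i ∈ s, IsBounded (A i)) :
    sSup ((fun a => f a) '' ∑ i ∈ s, A i) = ∑ i ∈ s, sSup ((fun a => f a) '' A i) := by
  classical
  induction s using Finset.cons_induction with
  | empty => simp [← Set.singleton_zero]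
  | cons i s hi ih =>
    rw [Finset.sum_cons, Finset.sum_cons,
      ← ih (fun j hj => hne j (Finset.mem_cons_of_mem hj))
        (fun j hj => hb j (Finset.mem_cons_of_mem hj))]
    have him : (fun a => f a) '' (A i + ∑ j ∈ s, A j)
        = (fun a => f a) '' A i + (fun a => f a) '' ∑ j ∈ s, A j := by
      exact Set.image_add f.toLinearMap.toAddMonoidHom
    rw [him]
    exact csSup_add ((hne i (Finset.mem_cons_self i s)).image _)
      (bddAbove_image' f (hb i (Finset.mem_cons_self i s)))
      ((nonempty_finsetSum s A fun j hj => hne j (Finset.mem_cons_of_mem hj)).image _)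
      (bddAbove_image' f (isBounded_finsetSum s A fun j hj => hb j (Finset.mem_cons_of_mem hj)))

lemma sSup_image_smul (f : X →L[ℝ] ℝ) {c : ℝ} (hc : 0 ≤ c) (A : Set X) :
    sSup ((fun a => f a) '' (c • A)) = c * sSup ((fun a => f a) '' A) := by
  have : (fun a => f a) '' (c • A) = c • ((fun a => f a) '' A) :=
    image_smul_set f c A
  rw [this, Real.sSup_smul_of_nonneg hc, smul_eq_mul]

lemma sSup_le_sSup_add_of_hausdorff (f : X →L[ℝ] ℝ) (hf : ‖f‖ ≤ 1) {A B : Set X}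
    (hA : A.Nonempty) (hBb : IsBounded B) {ε : ℝ} (hε : 0 < ε)
    (hd : EMetric.hausdorffEdist A B < ENNReal.ofReal ε) :
    sSup ((fun a => f a) '' A) ≤ sSup ((fun a => f a) '' B) + ε := by
  have hfin : EMetric.hausdorffEdist A B ≠ ⊤ := hd.ne_top
  have hdist : Metric.hausdorffDist A B < ε := by
    rw [Metric.hausdorffDist]
    exact ENNReal.toReal_lt_of_lt_ofReal hd
  apply csSup_le (hA.image _)
  rintro _ ⟨a, ha, rfl⟩
  obtain ⟨b, hb, hab⟩ := Metric.exists_dist_lt_of_hausdorffDist_lt ha hdist hfin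
  have h1 : f a - f b ≤ ε := by
    calc f a - f b = f (a - b) := by rw [map_sub]
    _ ≤ ‖f (a - b)‖ := le_abs_self _
    _ ≤ ‖f‖ * ‖a - b‖ := f.le_opNorm _
    _ ≤ 1 * ε := by
        apply mul_le_mul hf _ (norm_nonneg _) zero_le_one
        rw [← dist_eq_norm]; exact hab.le
    _ = ε := one_mul ε
  have h2 : f b ≤ sSup ((fun a => f a) '' B) :=
    le_csSup (bddAbove_image' f hBb) ⟨b, hb, rfl⟩
  linarith

lemma tag_in_Icc (P : TaggedPartition) (i : Fin P.n) : P.tag i ∈ Set.Icc (0:ℝ) 1 := by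
  obtain ⟨h1, h2⟩ := P.tag_mem i
  constructor
  · calc (0:ℝ) = P.pt 0 := P.pt_zero.symm
      _ ≤ P.pt i.castSucc := P.pt_mono (Fin.zero_le _)
      _ ≤ P.tag i := h1
  · calc P.tag i ≤ P.pt i.succ := h2
      _ ≤ P.pt (Fin.last P.n) := P.pt_mono (Fin.le_last _)
      _ = 1 := P.pt_last

end AuxPhi

/-- For a convex-valued bounded multifunction `F` and a nonempty closed bounded set `L`,
if the Riemann sums of `F` converge to `L` in Hausdorff distance along a sequence of
tagged partitions, then the Riemann sums of `φ ∘ F` converge to `φ(L)` uniformly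
(i.e. in the sup norm of `ℓ∞(B_{X*})`). -/

theorem tendstoUniformly_psum_of_tendsto_msum
    {X : Type*} [NormedAddCommGroup X] [NormedSpace ℝ X] [CompleteSpace X]
    (F : ℝ → Set X)
    (hFne : ∀ t ∈ Set.Icc (0 : ℝ) 1, (F t).Nonempty)
    (hFbdd : ∃ M : ℝ, ∀ t ∈ Set.Icc (0 : ℝ) 1, ∀ a ∈ F t, ‖a‖ ≤ M)
    (hFconv : ∀ t ∈ Set.Icc (0 : ℝ) 1, Convex ℝ (F t))
    (L : Set X) (hLne : L.Nonempty) (hLcl : IsClosed L)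
    (hLbdd : Bornology.IsBounded L)
    (P : ℕ → TaggedPartition)
    (h : Tendsto (fun k => EMetric.hausdorffEdist (msum F (P k)) L) atTop (nhds 0)) :
    TendstoUniformly (fun k => psum F (P k)) (phiFun L) atTop := by
  classical
  obtain ⟨M, hM⟩ := hFbdd
  -- boundedness / nonemptiness facts
  have hFb : ∀ t ∈ Set.Icc (0:ℝ) 1, Bornology.IsBounded (F t) := by
    intro t ht
    rw [isBounded_iff_forall_norm_le]
    exact ⟨M, hM t ht⟩
  have hwnn : ∀ (Q : TaggedPartition) (i : Fin Q.n),
      0 ≤ Q.pt i.succ - Q.pt i.castSucc := by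
    intro Q i
    have := Q.pt_mono (Fin.castSucc_le_succ i)
    linarith
  have hSne : ∀ Q : TaggedPartition, (msum F Q).Nonempty := by
    intro Q
    refine nonempty_finsetSum _ _ fun i _ => ?_
    exact (hFne _ (tag_in_Icc Q i)).smul_set
  have hSb : ∀ Q : TaggedPartition, Bornology.IsBounded (msum F Q) := by
    intro Q
    refine isBounded_finsetSum _ _ fun i _ => ?_
    exact (hFb _ (tag_in_Icc Q i)).smul₀ _
  -- psum = phiFun ∘ msum
  have key : ∀ (Q : TaggedPartition) (g : ↥(Metric.closedBall (0 : X →L[ℝ] ℝ) 1)),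
      psum F Q g = phiFun (msum F Q) g := by
    intro Q g
    have h1 : phiFun (msum F Q) g
        = ∑ i : Fin Q.n, sSup ((fun a => (g : X →L[ℝ] ℝ) a) ''
            ((Q.pt i.succ - Q.pt i.castSucc) • F (Q.tag i))) := by
      unfold phiFun msum
      exact sSup_image_finsetSum _ _ _
        (fun i _ => (hFne _ (tag_in_Icc Q i)).smul_set)
        (fun i _ => (hFb _ (tag_in_Icc Q i)).smul₀ _)
    rw [h1]
    unfold psum
    rw [Finset.sum_apply]
    refine Finset.sum_congr rfl fun i _ => ?_
    rw [Pi.smul_apply, smul_eq_mul]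
    unfold phiFun
    rw [sSup_image_smul _ (hwnn Q i)]
  -- main estimate
  rw [Metric.tendstoUniformly_iff]
  intro ε hε
  have hhalf : (0:ℝ) < ε / 2 := by linarith
  have hev : ∀ᶠ k in atTop,
      EMetric.hausdorffEdist (msum F (P k)) L < ENNReal.ofReal (ε / 2) :=
    h.eventually_lt_const (by simp [hhalf])
  filter_upwards [hev] with k hk
  intro g
  have hg : ‖(g : X →L[ℝ] ℝ)‖ ≤ 1 := by
    have := g.2
    rwa [Metric.mem_closedBall, dist_zero_right] at this
  have hk' : EMetric.hausdorffEdist L (msum F (P k)) < ENNReal.ofReal (ε / 2) := by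
    exact Metric.hausdorffEDist_comm.trans_lt hk
  have e1 : phiFun (msum F (P k)) g ≤ phiFun L g + ε / 2 :=
    sSup_le_sSup_add_of_hausdorff _ hg (hSne (P k)) hLbdd hhalf hk
  have e2 : phiFun L g ≤ phiFun (msum F (P k)) g + ε / 2 :=
    sSup_le_sSup_add_of_hausdorff _ hg hLne (hSb (P k)) hhalf hk'
  rw [key (P k) g, Real.dist_eq, abs_sub_lt_iff]
  constructor <;> linarith
end

section
/- Let X be a finite-dimensional real Banach space and let F : [0,1] → 2^X \ {∅} be a bounded multifunction. Then I(F) is nonempty. -/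
open Pointwise Filter Metric Set

noncomputable def unifP (k : ℕ) : TaggedPartition where
  n := k + 1
  pt := fun i => (i : ℕ) / (k + 1)
  tag := fun i => (i : ℕ) / (k + 1)
  pt_zero := by simp
  pt_last := by
    simp only [Fin.val_last]
    push_cast
    rw [div_self]; positivity
  pt_mono := fun i j hij => by
    have h : (i : ℕ) ≤ (j : ℕ) := hij
    dsimp only
    gcongr
  tag_mem := fun i => by
    constructor
    · simp [Fin.coe_castSucc]
    · simp only [Fin.val_succ]
      gcongr
      push_cast; linarith

lemma unifP_coeff (k : ℕ) (i : Fin (k + 1)) :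
    (unifP k).pt i.succ - (unifP k).pt i.castSucc = 1 / (k + 1) := by
  simp only [unifP, Fin.val_succ, Fin.coe_castSucc]
  push_cast
  field_simp
  ring

lemma unifP_mesh (k : ℕ) : (unifP k).mesh = 1 / (k + 1) := by
  unfold TaggedPartition.mesh
  haveI : Nonempty (Fin (unifP k).n) := ⟨⟨0, Nat.succ_pos k⟩⟩
  show ⨆ i : Fin (k+1), ((unifP k).pt i.succ - (unifP k).pt i.castSucc) = _
  simp only [unifP_coeff]
  exact ciSup_const

lemma unifP_tag_mem (k : ℕ) (i : Fin (k + 1)) : (unifP k).tag i ∈ Set.Icc (0:ℝ) 1 := by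
  have h := (unifP k).tag_mem i
  have h0 : (0:ℝ) ≤ (unifP k).pt i.castSucc := by
    rw [← (unifP k).pt_zero]; exact (unifP k).pt_mono (Fin.zero_le _)
  have h1 : (unifP k).pt i.succ ≤ 1 := by
    rw [← (unifP k).pt_last]; exact (unifP k).pt_mono (Fin.le_last _)
  exact ⟨h0.trans h.1, h.2.trans h1⟩

lemma msum_nonempty_s16 {X : Type*} [NormedAddCommGroup X] [NormedSpace ℝ X]
    (F : ℝ → Set X) (hFne : ∀ t ∈ Set.Icc (0 : ℝ) 1, (F t).Nonempty) (k : ℕ) :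
    (msum F (unifP k)).Nonempty := by
  unfold msum
  apply Finset.sum_induction _ Set.Nonempty (fun a b ha hb => ha.add hb)
  · exact ⟨0, rfl⟩
  · intro i _
    exact (hFne _ (unifP_tag_mem k i)).smul_set

lemma msum_subset {X : Type*} [NormedAddCommGroup X] [NormedSpace ℝ X]
    (F : ℝ → Set X) (M : ℝ) (hM : 0 ≤ M)
    (hFbdd : ∀ t ∈ Set.Icc (0 : ℝ) 1, ∀ a ∈ F t, ‖a‖ ≤ M) (k : ℕ) :
    msum F (unifP k) ⊆ Metric.closedBall (0 : X) M := by
  intro x hx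
  rw [msum, Set.mem_finset_sum] at hx
  obtain ⟨g, hg, rfl⟩ := hx
  rw [Metric.mem_closedBall, dist_zero_right]
  calc ‖∑ i, g i‖ ≤ ∑ i, ‖g i‖ := norm_sum_le _ _
    _ ≤ ∑ _i : Fin (k+1), (1 / (k+1)) * M := by
        apply Finset.sum_le_sum
        intro i _
        obtain ⟨a, ha, hga⟩ := hg (Finset.mem_univ i)
        rw [← hga, norm_smul,
          show (unifP k).pt i.succ - (unifP k).pt i.castSucc = 1 / (k + 1) from unifP_coeff k i, Real.norm_eq_abs,
          abs_of_nonneg (by positivity)]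
        exact mul_le_mul_of_nonneg_left (hFbdd _ (unifP_tag_mem k i) a ha) (by positivity)
    _ = M := by
        rw [Finset.sum_const, Finset.card_univ, Fintype.card_fin, nsmul_eq_mul]
        push_cast
        field_simp

/-- For a bounded multifunction on `[0,1]` with values in a finite-dimensional real
Banach space, `I(F)` is nonempty. -/
theorem limitSets_nonempty_of_finiteDimensional
    {X : Type*} [NormedAddCommGroup X] [NormedSpace ℝ X] [FiniteDimensional ℝ X]
    (F : ℝ → Set X)
    (hFne : ∀ t ∈ Set.Icc (0 : ℝ) 1, (F t).Nonempty)
    (hFbdd : ∃ M : ℝ, ∀ t ∈ Set.Icc (0 : ℝ) 1, ∀ a ∈ F t, ‖a‖ ≤ M) :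
    (limitSets F).Nonempty := by
  obtain ⟨M₀, hM₀⟩ := hFbdd
  set M : ℝ := max M₀ 0 with hMdef
  have hM : 0 ≤ M := le_max_right _ _
  have hMb : ∀ t ∈ Set.Icc (0:ℝ) 1, ∀ a ∈ F t, ‖a‖ ≤ M :=
    fun t ht a ha => (hM₀ t ht a ha).trans (le_max_left _ _)
  set B : Set X := Metric.closedBall (0:X) M with hBdef
  have hBcl : IsClosed B := Metric.isClosed_closedBall
  have hBc : IsCompact B := isCompact_closedBall _ _
  haveI : CompactSpace B := isCompact_iff_compactSpace.mp hBc
  have hsub : ∀ k, msum F (unifP k) ⊆ B := msum_subset F M hM hMb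
  have hne : ∀ k, (msum F (unifP k)).Nonempty := msum_nonempty_s16 F hFne
  set t : ℕ → Set B := fun k => closure (Subtype.val ⁻¹' msum F (unifP k)) with htdef
  have htc : ∀ k, IsCompact (t k) := fun k => isClosed_closure.isCompact
  have htne : ∀ k, (t k).Nonempty := by
    intro k
    obtain ⟨x, hx⟩ := hne k
    exact ⟨⟨x, hsub k hx⟩, subset_closure hx⟩
  set K : ℕ → TopologicalSpace.NonemptyCompacts B :=
    fun k => ⟨⟨t k, htc k⟩, htne k⟩ with hKdef
  obtain ⟨L, -, φ, hφ, hconv⟩ :=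
    isCompact_univ.tendsto_subseq (fun k => Set.mem_univ (K k))
  set A : Set X := Subtype.val '' (L : Set B) with hAdef
  have hAne : A.Nonempty := L.nonempty.image _
  have hAcl : IsClosed A := (L.isCompact.image continuous_subtype_val).isClosed
  have himg : ∀ k, Subtype.val '' (t k) = closure (msum F (unifP k)) := by
    intro k
    rw [htdef]
    rw [← hBcl.isClosedEmbedding_subtypeVal.closure_image_eq,
      Subtype.image_preimage_coe, Set.inter_eq_self_of_subset_right (hsub k)]
  have hkey : ∀ j, EMetric.hausdorffEdist (msum F (unifP (φ j))) A
      = edist (K (φ j)) L := by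
    intro j
    have : edist (K (φ j)) L = EMetric.hausdorffEdist (t (φ j)) (L : Set B) := rfl
    unfold EMetric.hausdorffEdist at this ⊢
    rw [this, ← EMetric.hausdorffEdist_image isometry_subtype_coe, himg, hAdef,
      EMetric.hausdorffEdist_closure₁]
  have hmesh : Tendsto (fun j => (unifP (φ j)).mesh) atTop (nhds 0) := by
    simp only [unifP_mesh]
    exact tendsto_one_div_add_atTop_nhds_zero_nat.comp hφ.tendsto_atTop
  have hed : Tendsto (fun j => edist (K (φ j)) L) atTop (nhds 0) := by
    have := hconv.edist (tendsto_const_nhds (x := L))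
    simpa [edist_self] using this
  exact ⟨A, hAne, hAcl, fun j => unifP (φ j), hmesh, by simpa only [hkey] using hed⟩
end
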